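/- arXiv:1601.01236 — 5 statements merged into one kernel-verified Lean document; each statement's English description precedes it below -/
import Mathlib

section
/- Let Q be a function from density matrices on ℂ^m ⊗ ℂ^n to ℝ that is nonnegative and satisfies Q(σ) > 0 for every density matrix σ that is not classically correlated. If ρ is a density matrix on ℂ^m ⊗ ℂ^n that is not a product state, then there exists d ≥ 1 such that PQ_d(ρ) > 0. -/
open Matrix
open scoped Kronecker ComplexOrder

/-- A density matrix: positive semidefinite with unit trace. -/
def IsDensity {N : Type*} [Fintype N] (ρ : Matrix N N ℂ) : Prop :=
  ρ.PosSemidef ∧ ρ.trace = 1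

/-- The rank-one projector `|v⟩⟨v|`. -/
def proj {N : Type*} (v : N → ℂ) : Matrix N N ℂ :=
  Matrix.vecMulVec v (star v)

/-- `e` is an orthonormal basis of `ℂ^N` (as an indexed family of vectors). -/
def Onb {N : Type*} [Fintype N] [DecidableEq N] (e : N → N → ℂ) : Prop :=
  ∀ i j, (∑ k, star (e i k) * e j k) = if i = j then (1 : ℂ) else 0

def IsUnitary {N : Type*} [Fintype N] [DecidableEq N] (U : Matrix N N ℂ) : Prop :=
  Uᴴ * U = 1 ∧ U * Uᴴ = 1

/-- A product state with respect to the bipartition `α | β`. -/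
def IsProduct {α β : Type*} [Fintype α] [Fintype β]
    (ρ : Matrix (α × β) (α × β) ℂ) : Prop :=
  ∃ (ρA : Matrix α α ℂ) (ρB : Matrix β β ℂ),
    IsDensity ρA ∧ IsDensity ρB ∧ ρ = ρA ⊗ₖ ρB

/-- Classically correlated with respect to the bipartition `α | β`. -/
def IsCC {α β : Type*} [Fintype α] [DecidableEq α] [Fintype β] [DecidableEq β]
    (ρ : Matrix (α × β) (α × β) ℂ) : Prop :=
  ∃ (e : α → α → ℂ) (f : β → β → ℂ) (p : α → β → ℝ),
    Onb e ∧ Onb f ∧ (∀ i j, 0 ≤ p i j) ∧ (∑ i, ∑ j, p i j) = 1 ∧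
    ρ = ∑ i, ∑ j, ((p i j : ℂ)) • (proj (e i) ⊗ₖ proj (f j))

/-- Partial trace over the second tensor factor. -/
noncomputable def ptrace2 {a b : Type*} [Fintype b] (X : Matrix (a × b) (a × b) ℂ) : Matrix a a ℂ :=
  Matrix.of fun i j => ∑ k, X (i, k) (j, k)

/-- Partial trace over the first tensor factor. -/
noncomputable def ptrace1 {a b : Type*} [Fintype a] (X : Matrix (a × b) (a × b) ℂ) : Matrix b b ℂ :=
  Matrix.of fun i j => ∑ k, X (k, i) (k, j)

/-- Apply a Kraus family to a matrix: `σ ↦ Σ_k K_k σ K_k†`. -/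
noncomputable def kraus {N : Type*} [Fintype N] {d : ℕ} (K : Fin d → Matrix N N ℂ)
    (σ : Matrix N N ℂ) : Matrix N N ℂ :=
  ∑ k, K k * σ * (K k)ᴴ

/-- A quantum channel of Kraus rank at most `d`. -/
def IsChannel {N : Type*} [Fintype N] [DecidableEq N] (d : ℕ)
    (Φ : Matrix N N ℂ → Matrix N N ℂ) : Prop :=
  ∃ K : Fin d → Matrix N N ℂ,
    (∑ k, (K k)ᴴ * K k) = 1 ∧ ∀ σ, Φ σ = kraus K σ

/-- The local operation `Φ_A ⊗ Φ_B` determined by two Kraus families. -/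
noncomputable def localKraus {α β : Type*} [Fintype α] [Fintype β] {dA dB : ℕ}
    (KA : Fin dA → Matrix α α ℂ) (KB : Fin dB → Matrix β β ℂ)
    (σ : Matrix (α × β) (α × β) ℂ) : Matrix (α × β) (α × β) ℂ :=
  ∑ k, ∑ l, (KA k ⊗ₖ KB l) * σ * (KA k ⊗ₖ KB l)ᴴ

/-- A local operation of rank at most `d`: `Φ_A ⊗ Φ_B` with both local channels of
Kraus rank at most `d`. -/
def IsLocalOp {α β : Type*} [Fintype α] [DecidableEq α] [Fintype β] [DecidableEq β] (d : ℕ)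
    (Φ : Matrix (α × β) (α × β) ℂ → Matrix (α × β) (α × β) ℂ) : Prop :=
  ∃ (KA : Fin d → Matrix α α ℂ) (KB : Fin d → Matrix β β ℂ),
    (∑ k, (KA k)ᴴ * KA k) = 1 ∧ (∑ l, (KB l)ᴴ * KB l) = 1 ∧
    ∀ σ, Φ σ = localKraus KA KB σ

/-- The potential quantumness of rank `d` associated with the quantumness measure `Q`. -/
noncomputable def PQ {α β : Type*} [Fintype α] [DecidableEq α] [Fintype β] [DecidableEq β]
    (d : ℕ) (Q : Matrix (α × β) (α × β) ℂ → ℝ)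
    (ρ : Matrix (α × β) (α × β) ℂ) : EReal :=
  sSup {x : EReal | ∃ Φ, IsLocalOp d Φ ∧ x = (Q (Φ ρ) : EReal)}

section Aux

open Finset

variable {N : Type*} [Fintype N]

lemma S5_vmv_mul (a b c d : N → ℂ) :
    vecMulVec a b * vecMulVec c d = (b ⬝ᵥ c) • vecMulVec a d := by
  ext i j
  simp [vecMulVec_apply, Matrix.mul_apply, dotProduct, Finset.sum_mul, Finset.mul_sum]
  exact Finset.sum_congr rfl fun k _ => by ring

lemma S5_vmv_conjTranspose (a b : N → ℂ) :
    (vecMulVec a b)ᴴ = vecMulVec (star b) (star a) := by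
  ext i j; simp [vecMulVec_apply, Matrix.conjTranspose_apply, mul_comm]

lemma S5_proj_conjTranspose (v : N → ℂ) : (proj v)ᴴ = proj v := by
  ext i j; simp [proj, vecMulVec_apply, Matrix.conjTranspose_apply, mul_comm]

lemma S5_proj_psd (v : N → ℂ) : (proj v).PosSemidef := by
  refine Matrix.posSemidef_iff_dotProduct_mulVec.mpr ⟨S5_proj_conjTranspose v, fun x => ?_⟩
  have : star x ⬝ᵥ (proj v) *ᵥ x = star (star v ⬝ᵥ x) * (star v ⬝ᵥ x) := by
    simp [proj, dotProduct, Matrix.mulVec, vecMulVec_apply, Finset.mul_sum, Finset.sum_mul]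
    rw [Finset.sum_comm]
    exact Finset.sum_congr rfl fun k _ => Finset.sum_congr rfl fun l _ => by ring
  rw [this]
  exact star_mul_self_nonneg _

lemma S5_trace_proj (v : N → ℂ) (h : star v ⬝ᵥ v = 1) : (proj v).trace = 1 := by
  rw [← h]
  simp [proj, Matrix.trace, Matrix.diag, vecMulVec_apply, dotProduct, mul_comm]

lemma S5_proj_idem (v : N → ℂ) (h : star v ⬝ᵥ v = 1) : proj v * proj v = proj v := by
  unfold proj; rw [S5_vmv_mul, h, one_smul]

lemma S5_proj_kron {α β : Type*} (u : α → ℂ) (v : β → ℂ) :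
    proj u ⊗ₖ proj v = proj (fun p : α × β => u p.1 * v p.2) := by
  ext ⟨i,j⟩ ⟨k,l⟩
  simp [proj, vecMulVec_apply, Matrix.kroneckerMap_apply]
  ring

variable [DecidableEq N]

lemma S5_onb_dot {e : N → N → ℂ} (he : Onb e) (i j : N) :
    star (e i) ⬝ᵥ e j = if i = j then (1:ℂ) else 0 := by
  simpa [dotProduct] using he i j

lemma S5_onb_unit {e : N → N → ℂ} (he : Onb e) (i : N) : star (e i) ⬝ᵥ e i = 1 := by
  simpa using S5_onb_dot he i i

lemma S5_onb_complete {e : N → N → ℂ} (he : Onb e) : ∑ i, proj (e i) = 1 := by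
  set M : Matrix N N ℂ := Matrix.of fun i k => e i k with hM
  have h1 : M * Mᴴ = 1 := by
    ext i j
    simp only [Matrix.mul_apply, Matrix.conjTranspose_apply, hM, Matrix.of_apply,
      Matrix.one_apply]
    calc ∑ k, e i k * star (e j k) = star (∑ k, star (e i k) * e j k) := by
          simp [mul_comm]
        _ = _ := by rw [he i j]; split <;> simp [eq_comm]
  have h2 : Mᴴ * M = 1 := mul_eq_one_comm.mp h1
  ext k l
  have h0 := congrArg (fun A => A k l) h2
  simp only [Matrix.mul_apply, Matrix.conjTranspose_apply, hM, Matrix.of_apply] at h0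
  simp only [Matrix.sum_apply, proj, vecMulVec_apply, Pi.star_apply]
  have h3 : ∑ i, e i k * star (e i l) = star (∑ i, star (e i k) * e i l) := by
    simp [mul_comm]
  rw [h3, h0]
  simp [Matrix.one_apply, apply_ite (star : ℂ → ℂ)]

lemma S5_onb_proj_mul {e : N → N → ℂ} (he : Onb e) (i j : N) :
    proj (e i) * proj (e j) = if i = j then proj (e i) else 0 := by
  unfold proj
  rw [S5_vmv_mul, S5_onb_dot he]
  by_cases h : i = j
  · subst h; simp
  · simp [h]

lemma S5_onb_proj_comm {e : N → N → ℂ} (he : Onb e) (i j : N) :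
    proj (e i) * proj (e j) = proj (e j) * proj (e i) := by
  rw [S5_onb_proj_mul he, S5_onb_proj_mul he]
  by_cases h : i = j
  · subst h; simp
  · simp [h, Ne.symm h]

end Aux

section Kron

open Finset

variable {α β : Type*} [Fintype α] [Fintype β]

omit [Fintype α] [Fintype β] in
lemma S5_kron_conjTranspose (A : Matrix α α ℂ) (B : Matrix β β ℂ) :
    (A ⊗ₖ B)ᴴ = Aᴴ ⊗ₖ Bᴴ := by
  ext ⟨i,j⟩ ⟨k,l⟩
  simp [Matrix.conjTranspose_apply, Matrix.kroneckerMap_apply]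

omit [Fintype α] [Fintype β] in
lemma S5_sum_kron {ι : Type*} (s : Finset ι) (A : ι → Matrix α α ℂ) (B : Matrix β β ℂ) :
    (∑ i ∈ s, A i) ⊗ₖ B = ∑ i ∈ s, A i ⊗ₖ B := by
  ext ⟨i,j⟩ ⟨k,l⟩
  simp [Matrix.kroneckerMap_apply, Matrix.sum_apply, Finset.sum_mul]

omit [Fintype α] [Fintype β] in
lemma S5_kron_sum {ι : Type*} (s : Finset ι) (A : Matrix α α ℂ) (B : ι → Matrix β β ℂ) :
    A ⊗ₖ (∑ i ∈ s, B i) = ∑ i ∈ s, A ⊗ₖ B i := by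
  ext ⟨i,j⟩ ⟨k,l⟩
  simp [Matrix.kroneckerMap_apply, Matrix.sum_apply, Finset.mul_sum]

lemma S5_localKraus_kron {dA dB : ℕ} (KA : Fin dA → Matrix α α ℂ) (KB : Fin dB → Matrix β β ℂ)
    (A : Matrix α α ℂ) (B : Matrix β β ℂ) :
    localKraus KA KB (A ⊗ₖ B) = kraus KA A ⊗ₖ kraus KB B := by
  unfold localKraus kraus
  rw [S5_sum_kron]
  refine Finset.sum_congr rfl fun k _ => ?_
  rw [S5_kron_sum]
  refine Finset.sum_congr rfl fun l _ => ?_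
  rw [S5_kron_conjTranspose, ← Matrix.mul_kronecker_mul, ← Matrix.mul_kronecker_mul]

lemma S5_localKraus_smul {dA dB : ℕ} (KA : Fin dA → Matrix α α ℂ) (KB : Fin dB → Matrix β β ℂ)
    (c : ℂ) (σ : Matrix (α × β) (α × β) ℂ) :
    localKraus KA KB (c • σ) = c • localKraus KA KB σ := by
  unfold localKraus
  rw [Finset.smul_sum]
  refine Finset.sum_congr rfl fun k _ => ?_
  rw [Finset.smul_sum]
  refine Finset.sum_congr rfl fun l _ => ?_
  rw [Matrix.mul_smul, Matrix.smul_mul]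

lemma S5_localKraus_sum {ι : Type*} {dA dB : ℕ} (KA : Fin dA → Matrix α α ℂ)
    (KB : Fin dB → Matrix β β ℂ) (s : Finset ι) (σ : ι → Matrix (α × β) (α × β) ℂ) :
    localKraus KA KB (∑ i ∈ s, σ i) = ∑ i ∈ s, localKraus KA KB (σ i) := by
  unfold localKraus
  have h : ∀ (k : Fin dA) (l : Fin dB), (KA k ⊗ₖ KB l) * (∑ i ∈ s, σ i) * (KA k ⊗ₖ KB l)ᴴ
      = ∑ i ∈ s, (KA k ⊗ₖ KB l) * σ i * (KA k ⊗ₖ KB l)ᴴ := fun k l => by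
    rw [Matrix.mul_sum, Matrix.sum_mul]
  simp_rw [h]
  set G : Fin dA → Fin dB → ι → Matrix (α × β) (α × β) ℂ :=
    fun k l i => (KA k ⊗ₖ KB l) * σ i * (KA k ⊗ₖ KB l)ᴴ with hG
  calc ∑ k, ∑ l, ∑ i ∈ s, G k l i
      = ∑ k, ∑ i ∈ s, ∑ l, G k l i := Finset.sum_congr rfl fun k _ => Finset.sum_comm
    _ = ∑ i ∈ s, ∑ k, ∑ l, G k l i := Finset.sum_comm

omit [Fintype α] in
lemma S5_ptrace2_kron (A : Matrix α α ℂ) (B : Matrix β β ℂ) :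
    ptrace2 (A ⊗ₖ B) = B.trace • A := by
  ext i j
  simp only [ptrace2, Matrix.of_apply, Matrix.kroneckerMap_apply, Matrix.smul_apply,
    Matrix.trace, Matrix.diag, smul_eq_mul, Finset.sum_mul]
  exact Finset.sum_congr rfl fun k _ => by ring

omit [Fintype α] in
lemma S5_ptrace2_smul (c : ℂ) (σ : Matrix (α × β) (α × β) ℂ) :
    ptrace2 (c • σ) = c • ptrace2 σ := by
  ext i j
  simp [ptrace2, Finset.mul_sum]

omit [Fintype α] in
lemma S5_ptrace2_sum {ι : Type*} (s : Finset ι) (σ : ι → Matrix (α × β) (α × β) ℂ) :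
    ptrace2 (∑ i ∈ s, σ i) = ∑ i ∈ s, ptrace2 (σ i) := by
  ext i j
  simp only [ptrace2, Matrix.of_apply, Matrix.sum_apply]
  exact Finset.sum_comm

end Kron

section PadK

variable {m extra : ℕ}

/-- Kraus family sending `e i ↦ u i`, padded at the end with `extra` zero operators. -/
noncomputable def padK (e u : Fin m → Fin m → ℂ) (extra : ℕ) :
    Fin (m + extra) → Matrix (Fin m) (Fin m) ℂ :=
  Fin.addCases (fun i => vecMulVec (u i) (star (e i))) (fun _ => 0)

/-- Kraus family sending `e i ↦ u i`, padded at the beginning with `extra` zero operators. -/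
noncomputable def padK2 (e u : Fin m → Fin m → ℂ) (extra : ℕ) :
    Fin (extra + m) → Matrix (Fin m) (Fin m) ℂ :=
  Fin.addCases (fun _ => 0) (fun i => vecMulVec (u i) (star (e i)))

lemma padK_norm {e u : Fin m → Fin m → ℂ} (he : Onb e)
    (hu : ∀ i, star (u i) ⬝ᵥ u i = 1) :
    (∑ k, (padK e u extra k)ᴴ * padK e u extra k) = 1 := by
  rw [Fin.sum_univ_add]
  simp only [padK, Fin.addCases_left, Fin.addCases_right, Matrix.conjTranspose_zero,
    Matrix.zero_mul, Finset.sum_const_zero, add_zero]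
  have h : ∀ i : Fin m, (vecMulVec (u i) (star (e i)))ᴴ * vecMulVec (u i) (star (e i))
      = proj (e i) := by
    intro i
    rw [S5_vmv_conjTranspose, star_star, S5_vmv_mul, hu i, one_smul]
    rfl
  simp_rw [h]
  exact S5_onb_complete he

lemma padK2_norm {e u : Fin m → Fin m → ℂ} (he : Onb e)
    (hu : ∀ i, star (u i) ⬝ᵥ u i = 1) :
    (∑ k, (padK2 e u extra k)ᴴ * padK2 e u extra k) = 1 := by
  rw [Fin.sum_univ_add]
  simp only [padK2, Fin.addCases_left, Fin.addCases_right, Matrix.conjTranspose_zero,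
    Matrix.zero_mul, Finset.sum_const_zero, zero_add]
  have h : ∀ i : Fin m, (vecMulVec (u i) (star (e i)))ᴴ * vecMulVec (u i) (star (e i))
      = proj (e i) := by
    intro i
    rw [S5_vmv_conjTranspose, star_star, S5_vmv_mul, hu i, one_smul]
    rfl
  simp_rw [h]
  exact S5_onb_complete he

lemma kraus_padK {e : Fin m → Fin m → ℂ} (u : Fin m → Fin m → ℂ) (he : Onb e) (i : Fin m) :
    kraus (padK e u extra) (proj (e i)) = proj (u i) := by
  unfold kraus
  rw [Fin.sum_univ_add]
  simp only [padK, Fin.addCases_left, Fin.addCases_right, Matrix.conjTranspose_zero,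
    Matrix.zero_mul, Matrix.mul_zero, Finset.sum_const_zero, add_zero]
  have key : ∀ j : Fin m, vecMulVec (u j) (star (e j)) * proj (e i) *
      (vecMulVec (u j) (star (e j)))ᴴ = if j = i then proj (u i) else 0 := by
    intro j
    rw [S5_vmv_conjTranspose, star_star]
    unfold proj
    rw [S5_vmv_mul, Matrix.smul_mul, S5_vmv_mul, S5_onb_dot he, S5_onb_dot he, smul_smul]
    by_cases h : j = i
    · subst h; simp [proj]
    · simp [h, Ne.symm h]
  simp_rw [key]
  simp

lemma kraus_padK2 {e : Fin m → Fin m → ℂ} (u : Fin m → Fin m → ℂ) (he : Onb e) (i : Fin m) :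
    kraus (padK2 e u extra) (proj (e i)) = proj (u i) := by
  unfold kraus
  rw [Fin.sum_univ_add]
  simp only [padK2, Fin.addCases_left, Fin.addCases_right, Matrix.conjTranspose_zero,
    Matrix.zero_mul, Matrix.mul_zero, Finset.sum_const_zero, zero_add]
  have key : ∀ j : Fin m, vecMulVec (u j) (star (e j)) * proj (e i) *
      (vecMulVec (u j) (star (e j)))ᴴ = if j = i then proj (u i) else 0 := by
    intro j
    rw [S5_vmv_conjTranspose, star_star]
    unfold proj
    rw [S5_vmv_mul, Matrix.smul_mul, S5_vmv_mul, S5_onb_dot he, S5_onb_dot he, smul_smul]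
    by_cases h : j = i
    · subst h; simp [proj]
    · simp [h, Ne.symm h]
  simp_rw [key]
  simp

end PadK

section PSD

variable {N : Type*} [Fintype N]

lemma S5_psd_smul_real {c : ℝ} (hc : 0 ≤ c) {M : Matrix N N ℂ} (hM : M.PosSemidef) :
    ((c : ℂ) • M).PosSemidef := by
  refine Matrix.posSemidef_iff_dotProduct_mulVec.mpr ⟨?_, fun x => ?_⟩
  · unfold Matrix.IsHermitian
    rw [Matrix.conjTranspose_smul, hM.1.eq]
    congr 1
    simp [Complex.conj_ofReal]
  · rw [Matrix.smul_mulVec, dotProduct_smul, smul_eq_mul]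
    exact mul_nonneg (by exact_mod_cast hc) (hM.dotProduct_mulVec_nonneg x)

lemma S5_psd_sum_smul {ι : Type*} (s : Finset ι) (c : ι → ℝ) (hc : ∀ i ∈ s, 0 ≤ c i)
    (M : ι → Matrix N N ℂ) (hM : ∀ i, (M i).PosSemidef) :
    (∑ i ∈ s, (c i : ℂ) • M i).PosSemidef := by
  classical
  induction s using Finset.induction_on with
  | empty => simpa using Matrix.PosSemidef.zero
  | insert _ _ h ih =>
    rw [Finset.sum_insert h]
    exact Matrix.PosSemidef.add
      (S5_psd_smul_real (hc _ (Finset.mem_insert_self _ _)) (hM _))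
      (ih fun i hi => hc i (Finset.mem_insert_of_mem hi))

end PSD

section CC

variable {α β : Type*} [Fintype α] [DecidableEq α] [Fintype β] [DecidableEq β]

lemma S5_cc_comm {σ : Matrix (α × β) (α × β) ℂ} (h : IsCC σ) :
    σ * (ptrace2 σ ⊗ₖ 1) = (ptrace2 σ ⊗ₖ 1) * σ := by
  obtain ⟨e, f, p, he, hf, hp0, hp1, hσ⟩ := h
  have hpt : ptrace2 σ = ∑ i, ∑ j, (p i j : ℂ) • proj (e i) := by
    rw [hσ, S5_ptrace2_sum]
    refine Finset.sum_congr rfl fun i _ => ?_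
    rw [S5_ptrace2_sum]
    refine Finset.sum_congr rfl fun j _ => ?_
    rw [S5_ptrace2_smul, S5_ptrace2_kron, S5_trace_proj _ (S5_onb_unit hf j), one_smul]
  have hT : ptrace2 σ ⊗ₖ (1 : Matrix β β ℂ)
      = ∑ q : α × β, (p q.1 q.2 : ℂ) • (proj (e q.1) ⊗ₖ (1 : Matrix β β ℂ)) := by
    rw [hpt, S5_sum_kron, Fintype.sum_prod_type]
    refine Finset.sum_congr rfl fun i _ => ?_
    rw [S5_sum_kron]
    refine Finset.sum_congr rfl fun j _ => ?_
    rw [Matrix.smul_kronecker]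
  have hσ' : σ = ∑ q : α × β, (p q.1 q.2 : ℂ) • (proj (e q.1) ⊗ₖ proj (f q.2)) := by
    rw [Fintype.sum_prod_type]
    exact hσ
  rw [hT, hσ', Finset.sum_mul_sum, Finset.sum_mul_sum]
  refine (Finset.sum_congr rfl fun q _ => Finset.sum_congr rfl fun r _ => ?_).trans
    Finset.sum_comm
  rw [smul_mul_assoc, mul_smul_comm, smul_mul_assoc, mul_smul_comm, smul_smul, smul_smul,
    mul_comm ((p r.1 r.2 : ℂ)) ((p q.1 q.2 : ℂ)), ← Matrix.mul_kronecker_mul,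
    ← Matrix.mul_kronecker_mul, mul_one, one_mul, S5_onb_proj_comm he]

end CC
section MoreAux

lemma S5_dot_prod_unit {α β : Type*} [Fintype α] [Fintype β] {uu : α → ℂ} {vv : β → ℂ}
    (hu : star uu ⬝ᵥ uu = 1) (hv : star vv ⬝ᵥ vv = 1) :
    star (fun r : α × β => uu r.1 * vv r.2) ⬝ᵥ (fun r : α × β => uu r.1 * vv r.2) = 1 := by
  have h : star (fun r : α × β => uu r.1 * vv r.2) ⬝ᵥ (fun r : α × β => uu r.1 * vv r.2)
      = (star uu ⬝ᵥ uu) * (star vv ⬝ᵥ vv) := by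
    simp only [dotProduct, Pi.star_apply, Fintype.sum_prod_type, Finset.sum_mul_sum]
    refine Finset.sum_congr rfl fun i _ => Finset.sum_congr rfl fun j _ => ?_
    simp [mul_comm, mul_left_comm, mul_assoc]
  rw [h, hu, hv, one_mul]

lemma S5_prod_left {n : ℕ} (ρ : Matrix (Fin 1 × Fin n) (Fin 1 × Fin n) ℂ)
    (hρ : IsDensity ρ) : IsProduct ρ := by
  have hH : ∀ q r, ρ q r = star (ρ r q) := fun q r => by
    have := congrArg (fun M => M q r) hρ.1.1.symm
    simpa [Matrix.conjTranspose_apply] using this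
  refine ⟨1, ptrace1 ρ, ⟨Matrix.PosSemidef.one, by simp [Matrix.trace]⟩, ⟨Matrix.posSemidef_iff_dotProduct_mulVec.mpr ⟨?_, ?_⟩, ?_⟩, ?_⟩
  · -- Hermitian
    ext j j'
    simp only [Matrix.conjTranspose_apply, ptrace1, Matrix.of_apply, star_sum]
    exact Finset.sum_congr rfl fun k _ => (hH (k, j) (k, j')).symm
  · intro yv
    have key : star yv ⬝ᵥ (ptrace1 ρ) *ᵥ yv
        = star (fun q : Fin 1 × Fin n => yv q.2) ⬝ᵥ ρ *ᵥ (fun q : Fin 1 × Fin n => yv q.2) := by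
      simp only [dotProduct, Matrix.mulVec, ptrace1, Matrix.of_apply, Pi.star_apply,
        Fintype.sum_prod_type, Fin.sum_univ_one, Finset.mul_sum, Finset.sum_mul]
    rw [key]
    exact hρ.1.dotProduct_mulVec_nonneg _
  · have h2 := hρ.2
    simp only [Matrix.trace, Matrix.diag, Fintype.sum_prod_type, Fin.sum_univ_one] at h2 ⊢
    simpa [ptrace1, Fin.sum_univ_one] using h2
  · ext ⟨i, j⟩ ⟨i', j'⟩
    obtain rfl : i = 0 := Subsingleton.elim _ _
    obtain rfl : i' = 0 := Subsingleton.elim _ _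
    simp [Matrix.kroneckerMap_apply, ptrace1, Matrix.one_apply, Fin.sum_univ_one]

lemma S5_prod_right {m : ℕ} (ρ : Matrix (Fin m × Fin 1) (Fin m × Fin 1) ℂ)
    (hρ : IsDensity ρ) : IsProduct ρ := by
  have hH : ∀ q r, ρ q r = star (ρ r q) := fun q r => by
    have := congrArg (fun M => M q r) hρ.1.1.symm
    simpa [Matrix.conjTranspose_apply] using this
  refine ⟨ptrace2 ρ, 1, ⟨Matrix.posSemidef_iff_dotProduct_mulVec.mpr ⟨?_, ?_⟩, ?_⟩, ⟨Matrix.PosSemidef.one, by simp [Matrix.trace]⟩, ?_⟩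
  · ext j j'
    simp only [Matrix.conjTranspose_apply, ptrace2, Matrix.of_apply, star_sum]
    exact Finset.sum_congr rfl fun k _ => (hH (j, k) (j', k)).symm
  · intro yv
    have key : star yv ⬝ᵥ (ptrace2 ρ) *ᵥ yv
        = star (fun q : Fin m × Fin 1 => yv q.1) ⬝ᵥ ρ *ᵥ (fun q : Fin m × Fin 1 => yv q.1) := by
      simp only [dotProduct, Matrix.mulVec, ptrace2, Matrix.of_apply, Pi.star_apply,
        Fintype.sum_prod_type, Fin.sum_univ_one, Finset.mul_sum, Finset.sum_mul]
    rw [key]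
    exact hρ.1.dotProduct_mulVec_nonneg _
  · have h2 := hρ.2
    simp only [Matrix.trace, Matrix.diag, Fintype.sum_prod_type, Fin.sum_univ_one] at h2 ⊢
    simpa [ptrace2, Fin.sum_univ_one] using h2
  · ext ⟨i, j⟩ ⟨i', j'⟩
    obtain rfl : j = 0 := Subsingleton.elim _ _
    obtain rfl : j' = 0 := Subsingleton.elim _ _
    simp [Matrix.kroneckerMap_apply, ptrace2, Matrix.one_apply, Fin.sum_univ_one]

end MoreAux
/-- Let `Q` be nonnegative on density matrices and strictly positive on
density matrices that are not classically correlated.  If `ρ` is a density matrix that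
is not a product state, then `PQ_d(ρ) > 0` for some `d ≥ 1`. -/
theorem statement5 {m n : ℕ} (Q : Matrix (Fin m × Fin n) (Fin m × Fin n) ℂ → ℝ)
    (hpos : ∀ σ, IsDensity σ → 0 ≤ Q σ)
    (hqc : ∀ σ, IsDensity σ → ¬ IsCC σ → 0 < Q σ)
    (ρ : Matrix (Fin m × Fin n) (Fin m × Fin n) ℂ)
    (hρ : IsDensity ρ) (hnp : ¬ IsProduct ρ) :
    ∃ d : ℕ, 1 ≤ d ∧ (0 : EReal) < PQ d Q ρ := by
  classical
  by_cases hcc : IsCC ρ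
  case neg =>
    -- use the identity local operation of rank 1
    refine ⟨1, le_rfl, ?_⟩
    set Φ : Matrix (Fin m × Fin n) (Fin m × Fin n) ℂ → Matrix (Fin m × Fin n) (Fin m × Fin n) ℂ :=
      localKraus (fun _ : Fin 1 => (1 : Matrix (Fin m) (Fin m) ℂ))
        (fun _ : Fin 1 => (1 : Matrix (Fin n) (Fin n) ℂ)) with hΦ
    have hop : IsLocalOp 1 Φ := ⟨_, _, by simp, by simp, fun σ => rfl⟩
    have hΦρ : Φ ρ = ρ := by
      rw [hΦ]
      unfold localKraus
      simp [Matrix.one_kronecker_one]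
    have hQ : (0:ℝ) < Q (Φ ρ) := by rw [hΦρ]; exact hqc ρ hρ hcc
    have h1 : (0:EReal) < (Q (Φ ρ) : EReal) := by exact_mod_cast hQ
    have h2 : (Q (Φ ρ) : EReal) ≤ PQ 1 Q ρ := by
      unfold PQ
      exact le_sSup ⟨Φ, hop, rfl⟩
    exact lt_of_lt_of_le h1 h2
  case pos =>
    -- dimensions are at least 2
    have hm2 : 2 ≤ m := by
      by_contra h
      push_neg at h
      interval_cases m
      · have h0 : ρ.trace = 0 := by simp [Matrix.trace]
        rw [hρ.2] at h0
        exact one_ne_zero h0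
      · exact hnp (S5_prod_left ρ hρ)
    have hn2 : 2 ≤ n := by
      by_contra h
      push_neg at h
      interval_cases n
      · have h0 : ρ.trace = 0 := by simp [Matrix.trace]
        rw [hρ.2] at h0
        exact one_ne_zero h0
      · exact hnp (S5_prod_right ρ hρ)
    obtain ⟨e, f, p, he, hf, hp0, hp1, hρeq⟩ := hcc
    -- the distribution p is not a product distribution
    have key : ∃ i0 j0, p i0 j0 ≠ (∑ j, p i0 j) * (∑ i, p i j0) := by
      by_contra hco
      push_neg at hco
      apply hnp
      refine ⟨∑ i, ((∑ j, p i j : ℝ) : ℂ) • proj (e i),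
        ∑ j, ((∑ i, p i j : ℝ) : ℂ) • proj (f j),
        ⟨S5_psd_sum_smul _ _ (fun i _ => Finset.sum_nonneg fun j _ => hp0 i j) _
          (fun i => S5_proj_psd _), ?_⟩,
        ⟨S5_psd_sum_smul _ _ (fun j _ => Finset.sum_nonneg fun i _ => hp0 i j) _
          (fun j => S5_proj_psd _), ?_⟩, ?_⟩
      · rw [Matrix.trace_sum]
        have ht : ∀ i : Fin m, (((∑ j, p i j : ℝ) : ℂ) • proj (e i)).trace
            = ((∑ j, p i j : ℝ) : ℂ) := fun i => by
          rw [Matrix.trace_smul, S5_trace_proj _ (S5_onb_unit he i), smul_eq_mul, mul_one]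
        simp_rw [ht]
        rw [← Complex.ofReal_sum]
        exact_mod_cast hp1
      · rw [Matrix.trace_sum]
        have ht : ∀ j : Fin n, (((∑ i, p i j : ℝ) : ℂ) • proj (f j)).trace
            = ((∑ i, p i j : ℝ) : ℂ) := fun j => by
          rw [Matrix.trace_smul, S5_trace_proj _ (S5_onb_unit hf j), smul_eq_mul, mul_one]
        simp_rw [ht]
        rw [← Complex.ofReal_sum, Finset.sum_comm]
        exact_mod_cast hp1
      · rw [hρeq, S5_sum_kron]
        refine Finset.sum_congr rfl fun i _ => ?_
        rw [Matrix.smul_kronecker, S5_kron_sum, Finset.smul_sum]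
        refine Finset.sum_congr rfl fun j _ => ?_
        rw [Matrix.kronecker_smul, smul_smul, ← Complex.ofReal_mul, ← hco i j]
    obtain ⟨i0, j0, hne⟩ := key
    -- concrete vectors
    have h0m : 0 < m := by omega
    have h1m : 1 < m := by omega
    have h0n : 0 < n := by omega
    have h1n : 1 < n := by omega
    set c0 : Fin m := ⟨0, h0m⟩ with hc0
    set c1 : Fin m := ⟨1, h1m⟩ with hc1
    set d0 : Fin n := ⟨0, h0n⟩ with hd0
    set d1 : Fin n := ⟨1, h1n⟩ with hd1
    have hc01 : c0 ≠ c1 := by simp [hc0, hc1, Fin.ext_iff]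
    have hd01 : d0 ≠ d1 := by simp [hd0, hd1, Fin.ext_iff]
    set sR : ℝ := (Real.sqrt 2)⁻¹ with hsR
    set s : ℂ := (sR : ℂ) with hs
    have hsR2 : sR * sR = 1/2 := by
      rw [hsR, ← mul_inv, Real.mul_self_sqrt (by norm_num : (0:ℝ) ≤ 2)]
      norm_num
    have hss : s * s = 1/2 := by
      rw [hs, ← Complex.ofReal_mul, hsR2]
      norm_num
    have hstars : star s = s := by
      rw [hs]
      exact Complex.conj_ofReal _
    set x : Fin m → ℂ := fun k => if k = c0 then 1 else 0 with hx
    set y : Fin m → ℂ := fun k => if k = c0 then s else if k = c1 then s else 0 with hy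
    set w : Fin n → ℂ := fun k => if k = d0 then 1 else 0 with hw
    set z : Fin n → ℂ := fun k => if k = d0 then s else if k = d1 then s else 0 with hz
    have hx1 : star x ⬝ᵥ x = 1 := by
      simp [dotProduct, hx, apply_ite (star : ℂ → ℂ)]
    have hw1 : star w ⬝ᵥ w = 1 := by
      simp [dotProduct, hw, apply_ite (star : ℂ → ℂ)]
    have hy1 : star y ⬝ᵥ y = 1 := by
      have hterm : ∀ k, star (y k) * y k
          = (if k = c0 then (1/2 : ℂ) else 0) + (if k = c1 then (1/2 : ℂ) else 0) := by
        intro k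
        rw [hy]
        by_cases h0 : k = c0
        · subst h0
          simp [hc01, hstars, hss]
        · by_cases h1 : k = c1 <;> simp [h0, h1, Ne.symm hc01, hstars, hss]
      simp only [dotProduct, Pi.star_apply, hterm, Finset.sum_add_distrib,
        Finset.sum_ite_eq', Finset.mem_univ, if_true]
      norm_num
    have hz1 : star z ⬝ᵥ z = 1 := by
      have hterm : ∀ k, star (z k) * z k
          = (if k = d0 then (1/2 : ℂ) else 0) + (if k = d1 then (1/2 : ℂ) else 0) := by
        intro k
        rw [hz]
        by_cases h0 : k = d0
        · subst h0
          simp [hd01, hstars, hss]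
        · by_cases h1 : k = d1 <;> simp [h0, h1, Ne.symm hd01, hstars, hss]
      simp only [dotProduct, Pi.star_apply, hterm, Finset.sum_add_distrib,
        Finset.sum_ite_eq', Finset.mem_univ, if_true]
      norm_num
    -- entry facts
    have hXX : proj x * proj x = proj x := S5_proj_idem x hx1
    have hYY : proj y * proj y = proj y := S5_proj_idem y hy1
    have hX : proj x c0 c1 = 0 := by
      simp [proj, vecMulVec_apply, hx, hc01, Ne.symm hc01]
    have hY : proj y c0 c1 = 1/2 := by
      simp [proj, vecMulVec_apply, hy, hc01, Ne.symm hc01, hstars, hss]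
    have hW : proj w d1 d1 = 0 := by
      simp [proj, vecMulVec_apply, hw, Ne.symm hd01]
    have hZ : proj z d1 d1 = 1/2 := by
      simp [proj, vecMulVec_apply, hz, Ne.symm hd01, hstars, hss]
    have hxy : star x ⬝ᵥ y = s := by
      have hterm : ∀ k, star (x k) * y k = if k = c0 then s else 0 := by
        intro k
        rw [hx, hy]
        by_cases h0 : k = c0
        · subst h0; simp
        · simp [h0]
      simp only [dotProduct, Pi.star_apply, hterm, Finset.sum_ite_eq', Finset.mem_univ, if_true]
    have hXY : (proj x * proj y) c0 c1 = 1/2 := by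
      unfold proj
      rw [S5_vmv_mul, hxy]
      simp [vecMulVec_apply, hx, hy, Ne.symm hc01, hc01, hstars, hss]
    have hYX : (proj y * proj x) c0 c1 = 0 := by
      unfold proj
      rw [S5_vmv_mul]
      simp [vecMulVec_apply, hx, Ne.symm hc01]
    -- the local operation
    set u : Fin m → Fin m → ℂ := fun i => if i = i0 then x else y with hu
    set v : Fin n → Fin n → ℂ := fun j => if j = j0 then w else z with hv
    have hu1 : ∀ i, star (u i) ⬝ᵥ u i = 1 := fun i => by
      rw [hu]; by_cases h : i = i0 <;> simp [h, hx1, hy1]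
    have hv1 : ∀ j, star (v j) ⬝ᵥ v j = 1 := fun j => by
      rw [hv]; by_cases h : j = j0 <;> simp [h, hw1, hz1]
    set KA : Fin (m + n) → Matrix (Fin m) (Fin m) ℂ := padK e u n with hKA
    set KB : Fin (m + n) → Matrix (Fin n) (Fin n) ℂ := padK2 f v m with hKB
    refine ⟨m + n, by omega, ?_⟩
    set Φ := localKraus KA KB with hΦ
    have hop : IsLocalOp (m + n) Φ :=
      ⟨KA, KB, padK_norm he hu1, padK2_norm hf hv1, fun σ => rfl⟩
    -- the output state
    have hσsum : Φ ρ = ∑ i, ∑ j, (p i j : ℂ) • (proj (u i) ⊗ₖ proj (v j)) := by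
      rw [hΦ, hρeq, S5_localKraus_sum]
      refine Finset.sum_congr rfl fun i _ => ?_
      rw [S5_localKraus_sum]
      refine Finset.sum_congr rfl fun j _ => ?_
      rw [S5_localKraus_smul, S5_localKraus_kron, hKA, hKB, kraus_padK u he i,
        kraus_padK2 v hf j]
    have hflat : Φ ρ = ∑ q : Fin m × Fin n,
        (p q.1 q.2 : ℂ) • proj (fun r : Fin m × Fin n => u q.1 r.1 * v q.2 r.2) := by
      rw [hσsum, Fintype.sum_prod_type]
      exact Finset.sum_congr rfl fun i _ => Finset.sum_congr rfl fun j _ => by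
        rw [S5_proj_kron]
    have hden : IsDensity (Φ ρ) := by
      constructor
      · rw [hflat]
        exact S5_psd_sum_smul _ _ (fun q _ => hp0 q.1 q.2) _ (fun q => S5_proj_psd _)
      · rw [hflat, Matrix.trace_sum]
        have ht : ∀ q : Fin m × Fin n,
            ((p q.1 q.2 : ℂ) • proj (fun r : Fin m × Fin n => u q.1 r.1 * v q.2 r.2)).trace
            = ((p q.1 q.2 : ℝ) : ℂ) := fun q => by
          rw [Matrix.trace_smul,
            S5_trace_proj _ (S5_dot_prod_unit (hu1 q.1) (hv1 q.2)), smul_eq_mul, mul_one]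
        simp_rw [ht]
        rw [← Complex.ofReal_sum]
        rw [show (∑ q : Fin m × Fin n, p q.1 q.2) = ∑ i, ∑ j, p i j from
          Fintype.sum_prod_type _]
        exact_mod_cast hp1
    -- values of u, v
    have hux : u i0 = x := by rw [hu]; simp
    have huy : ∀ i, i ≠ i0 → u i = y := fun i hi => by rw [hu]; simp [hi]
    have hvw : v j0 = w := by rw [hv]; simp
    have hvz : ∀ j, j ≠ j0 → v j = z := fun j hj => by rw [hv]; simp [hj]
    -- inner split
    have inner : ∀ (i : Fin m) (M : Matrix (Fin m) (Fin m) ℂ),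
        (∑ j, (p i j : ℂ) • (M ⊗ₖ proj (v j)))
        = ((p i j0 : ℝ) : ℂ) • (M ⊗ₖ proj w)
          + (((∑ j, p i j) - p i j0 : ℝ) : ℂ) • (M ⊗ₖ proj z) := by
      intro i M
      rw [← Finset.add_sum_erase _ _ (Finset.mem_univ j0), hvw]
      congr 1
      have h2 : ∀ j ∈ Finset.univ.erase j0,
          (p i j : ℂ) • (M ⊗ₖ proj (v j)) = ((p i j : ℝ) : ℂ) • (M ⊗ₖ proj z) :=
        fun j hj => by rw [hvz j (Finset.ne_of_mem_erase hj)]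
      rw [Finset.sum_congr rfl h2, ← Finset.sum_smul, ← Complex.ofReal_sum,
        Finset.sum_erase_eq_sub (Finset.mem_univ j0)]
    -- the four-term form
    have hσ4 : Φ ρ = (((p i0 j0 : ℝ) : ℂ) • (proj x ⊗ₖ proj w)
          + (((∑ j, p i0 j) - p i0 j0 : ℝ) : ℂ) • (proj x ⊗ₖ proj z))
        + ((((∑ i, p i j0) - p i0 j0 : ℝ) : ℂ) • (proj y ⊗ₖ proj w)
          + ((1 - (∑ j, p i0 j) - ((∑ i, p i j0) - p i0 j0) : ℝ) : ℂ) • (proj y ⊗ₖ proj z)) := by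
      rw [hσsum, ← Finset.add_sum_erase _ _ (Finset.mem_univ i0), hux, inner i0 (proj x)]
      congr 1
      have h3 : ∀ i ∈ Finset.univ.erase i0,
          (∑ j, (p i j : ℂ) • (proj (u i) ⊗ₖ proj (v j)))
          = ((p i j0 : ℝ) : ℂ) • (proj y ⊗ₖ proj w)
            + (((∑ j, p i j) - p i j0 : ℝ) : ℂ) • (proj y ⊗ₖ proj z) := fun i hi => by
        rw [huy i (Finset.ne_of_mem_erase hi), inner i (proj y)]
      rw [Finset.sum_congr rfl h3, Finset.sum_add_distrib, ← Finset.sum_smul, ← Finset.sum_smul,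
        ← Complex.ofReal_sum, ← Complex.ofReal_sum,
        Finset.sum_erase_eq_sub (Finset.mem_univ i0), Finset.sum_sub_distrib,
        Finset.sum_erase_eq_sub (Finset.mem_univ i0)]
      congr 3
      rw [← hp1, Finset.sum_erase_eq_sub (Finset.mem_univ i0)]
    -- partial trace
    have hpt : ptrace2 (Φ ρ) = ((∑ j, p i0 j : ℝ) : ℂ) • proj x
        + ((1 - ∑ j, p i0 j : ℝ) : ℂ) • proj y := by
      have h1 : ptrace2 (Φ ρ) = ∑ i, ((∑ j, p i j : ℝ) : ℂ) • proj (u i) := by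
        rw [hσsum, S5_ptrace2_sum]
        refine Finset.sum_congr rfl fun i _ => ?_
        rw [S5_ptrace2_sum]
        have h4 : ∀ j, ptrace2 ((p i j : ℂ) • (proj (u i) ⊗ₖ proj (v j)))
            = (p i j : ℂ) • proj (u i) := fun j => by
          rw [S5_ptrace2_smul, S5_ptrace2_kron, S5_trace_proj _ (hv1 j), one_smul]
        simp_rw [h4]
        rw [← Finset.sum_smul, ← Complex.ofReal_sum]
      rw [h1, ← Finset.add_sum_erase _ _ (Finset.mem_univ i0), hux]
      congr 1
      have h5 : ∀ i ∈ Finset.univ.erase i0,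
          ((∑ j, p i j : ℝ) : ℂ) • proj (u i) = ((∑ j, p i j : ℝ) : ℂ) • proj y :=
        fun i hi => by rw [huy i (Finset.ne_of_mem_erase hi)]
      rw [Finset.sum_congr rfl h5, ← Finset.sum_smul, ← Complex.ofReal_sum,
        Finset.sum_erase_eq_sub (Finset.mem_univ i0), ← hp1]
    have hT : ptrace2 (Φ ρ) ⊗ₖ (1 : Matrix (Fin n) (Fin n) ℂ)
        = ((∑ j, p i0 j : ℝ) : ℂ) • (proj x ⊗ₖ 1)
          + ((1 - ∑ j, p i0 j : ℝ) : ℂ) • (proj y ⊗ₖ 1) := by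
      rw [hpt, Matrix.add_kronecker, Matrix.smul_kronecker, Matrix.smul_kronecker]
    -- the output is not classically correlated
    have hccσ : ¬ IsCC (Φ ρ) := by
      intro hccs
      have hcomm := S5_cc_comm hccs
      rw [hT, hσ4] at hcomm
      have hE := congrArg (fun M => M (c0, d1) (c1, d1)) hcomm
      simp only [Matrix.add_mul, Matrix.mul_add, smul_mul_assoc, mul_smul_comm, smul_smul,
        ← Matrix.mul_kronecker_mul, mul_one, one_mul, hXX, hYY,
        Matrix.add_apply, Matrix.smul_apply, Matrix.kroneckerMap_apply, smul_eq_mul,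
        hX, hY, hW, hZ, hXY, hYX] at hE
      apply hne
      have hfin : ((p i0 j0 : ℝ) : ℂ) = ((∑ j, p i0 j : ℝ) : ℂ) * ((∑ i, p i j0 : ℝ) : ℂ) := by
        push_cast at hE ⊢
        linear_combination (-4 : ℂ) * hE
      exact_mod_cast hfin
    have hQ : (0:ℝ) < Q (Φ ρ) := hqc _ hden hccσ
    have h1 : (0:EReal) < (Q (Φ ρ) : EReal) := by exact_mod_cast hQ
    have h2 : (Q (Φ ρ) : EReal) ≤ PQ (m + n) Q ρ := by
      unfold PQ
      exact le_sSup ⟨Φ, hop, rfl⟩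
    exact lt_of_lt_of_le h1 h2
end

section
/- Let |0⟩, |1⟩ be the standard basis of ℂ² and |+⟩ = (|0⟩ + |1⟩)/√2. For every p with 0 < p < 1, the two-qubit density matrix σ_p = p |0⟩⟨0| ⊗ |0⟩⟨0| + (1−p) |+⟩⟨+| ⊗ |+⟩⟨+| on ℂ² ⊗ ℂ² is not classically correlated. -/
open Matrix
open scoped Kronecker ComplexOrder

/-- The standard basis vector `|0⟩` of `ℂ²`. -/
noncomputable def ket0 : Fin 2 → ℂ := ![1, 0]

/-- The standard basis vector `|1⟩` of `ℂ²`. -/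
noncomputable def ket1 : Fin 2 → ℂ := ![0, 1]

/-- The vector `|+⟩ = (|0⟩ + |1⟩)/√2` of `ℂ²`. -/
noncomputable def ketPlus : Fin 2 → ℂ :=
  ![1 / (Real.sqrt 2 : ℂ), 1 / (Real.sqrt 2 : ℂ)]

/-- The two-qubit state `σ_p = p |0⟩⟨0| ⊗ |0⟩⟨0| + (1−p) |+⟩⟨+| ⊗ |+⟩⟨+|`. -/
noncomputable def sigmaP (p : ℝ) : Matrix (Fin 2 × Fin 2) (Fin 2 × Fin 2) ℂ :=
  (p : ℂ) • (proj ket0 ⊗ₖ proj ket0) +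
    ((1 - p : ℝ) : ℂ) • (proj ketPlus ⊗ₖ proj ketPlus)


lemma proj_mul_proj {N : Type*} [Fintype N] [DecidableEq N] (e : N → N → ℂ) (he : Onb e)
    (i j : N) : proj (e i) * proj (e j) = if i = j then proj (e i) else 0 := by
  ext a b
  have h : ∑ k, (e i a * star (e i k)) * (e j k * star (e j b))
      = (∑ k, star (e i k) * e j k) * (e i a * star (e j b)) := by
    rw [Finset.sum_mul]
    exact Finset.sum_congr rfl fun k _ => by ring
  simp only [proj, Matrix.mul_apply, Matrix.vecMulVec_apply, Pi.star_apply]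
  rw [h, he i j]
  by_cases hij : i = j
  · subst hij; simp [Matrix.vecMulVec_apply]
  · simp [hij]

lemma sum_kronecker' {ι a b : Type*} [Fintype a] [Fintype b] (s : Finset ι)
    (A : ι → Matrix a a ℂ) (B : Matrix b b ℂ) :
    (∑ i ∈ s, A i) ⊗ₖ B = ∑ i ∈ s, A i ⊗ₖ B := by
  ext ⟨i, j⟩ ⟨k, l⟩
  simp [Matrix.kroneckerMap_apply, Matrix.sum_apply, Finset.sum_mul]

lemma cc_commute {α β : Type*} [Fintype α] [DecidableEq α] [Fintype β] [DecidableEq β]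
    (e : α → α → ℂ) (f : β → β → ℂ) (q : α → β → ℝ) (he : Onb e) (c : α → ℂ) :
    ((∑ i, c i • proj (e i)) ⊗ₖ (1 : Matrix β β ℂ)) *
      (∑ i, ∑ j, ((q i j : ℂ)) • (proj (e i) ⊗ₖ proj (f j)))
    = (∑ i, ∑ j, ((q i j : ℂ)) • (proj (e i) ⊗ₖ proj (f j))) *
      ((∑ i, c i • proj (e i)) ⊗ₖ (1 : Matrix β β ℂ)) := by
  have hPP := proj_mul_proj e he
  have h1 : ((∑ a, c a • proj (e a)) ⊗ₖ (1 : Matrix β β ℂ)) *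
      (∑ i, ∑ j, ((q i j : ℂ)) • (proj (e i) ⊗ₖ proj (f j)))
      = ∑ i, ∑ j, (c i * q i j) • (proj (e i) ⊗ₖ proj (f j)) := by
    calc ((∑ a, c a • proj (e a)) ⊗ₖ (1 : Matrix β β ℂ)) *
        (∑ i, ∑ j, ((q i j : ℂ)) • (proj (e i) ⊗ₖ proj (f j)))
        = ∑ a, ∑ i, ∑ j, (c a * q i j) • ((proj (e a) * proj (e i)) ⊗ₖ proj (f j)) := by
          rw [sum_kronecker', Finset.sum_mul]
          refine Finset.sum_congr rfl fun a _ => ?_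
          rw [Finset.mul_sum]
          refine Finset.sum_congr rfl fun i _ => ?_
          rw [Finset.mul_sum]
          refine Finset.sum_congr rfl fun j _ => ?_
          rw [Matrix.smul_kronecker, smul_mul_assoc, mul_smul_comm, smul_smul]
          congr 1
          rw [← Matrix.mul_kronecker_mul, Matrix.one_mul]
      _ = ∑ i, ∑ j, (c i * q i j) • (proj (e i) ⊗ₖ proj (f j)) := by
          rw [Finset.sum_comm]
          refine Finset.sum_congr rfl fun i _ => ?_
          rw [Finset.sum_comm]
          refine Finset.sum_congr rfl fun j _ => ?_
          rw [Finset.sum_eq_single i (fun a _ ha => by simp [hPP, ha]) (by simp)]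
          simp [hPP]
  have h2 : (∑ i, ∑ j, ((q i j : ℂ)) • (proj (e i) ⊗ₖ proj (f j))) *
      ((∑ a, c a • proj (e a)) ⊗ₖ (1 : Matrix β β ℂ))
      = ∑ i, ∑ j, (c i * q i j) • (proj (e i) ⊗ₖ proj (f j)) := by
    calc (∑ i, ∑ j, ((q i j : ℂ)) • (proj (e i) ⊗ₖ proj (f j))) *
        ((∑ a, c a • proj (e a)) ⊗ₖ (1 : Matrix β β ℂ))
        = ∑ i, ∑ j, ∑ a, (q i j * c a) • ((proj (e i) * proj (e a)) ⊗ₖ proj (f j)) := by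
          rw [Finset.sum_mul]
          refine Finset.sum_congr rfl fun i _ => ?_
          rw [Finset.sum_mul]
          refine Finset.sum_congr rfl fun j _ => ?_
          rw [sum_kronecker', smul_mul_assoc, Finset.mul_sum, Finset.smul_sum]
          refine Finset.sum_congr rfl fun a _ => ?_
          rw [Matrix.smul_kronecker, mul_smul_comm, smul_smul]
          congr 1
          rw [← Matrix.mul_kronecker_mul, Matrix.mul_one]
      _ = ∑ i, ∑ j, (c i * q i j) • (proj (e i) ⊗ₖ proj (f j)) := by
          refine Finset.sum_congr rfl fun i _ => ?_
          refine Finset.sum_congr rfl fun j _ => ?_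
          rw [Finset.sum_eq_single i (fun a _ ha => by simp [hPP, Ne.symm ha]) (by simp)]
          simp [hPP, mul_comm]
  rw [h1, h2]

/-- For every `0 < p < 1`, the two-qubit state
`σ_p = p |0⟩⟨0| ⊗ |0⟩⟨0| + (1−p) |+⟩⟨+| ⊗ |+⟩⟨+|` is not classically correlated. -/
theorem statement6 (p : ℝ) (hp0 : 0 < p) (hp1 : p < 1) :
    ¬ IsCC (sigmaP p) := by
  rintro ⟨e, f, q, he, hf, hq0, hq1, hρ⟩
  set c : Fin 2 → ℂ := fun i => ((∑ j, q i j : ℝ) : ℂ) with hc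
  -- trace of proj (f j) is 1
  have htrF : ∀ j, (∑ k, proj (f j) k k) = 1 := by
    intro j
    have h := hf j j
    rw [if_pos rfl] at h
    calc (∑ k, proj (f j) k k) = ∑ k, star (f j k) * f j k := by
          refine Finset.sum_congr rfl fun k _ => ?_
          simp [proj, Matrix.vecMulVec_apply, mul_comm]
      _ = 1 := h
  -- partial trace of the CC form
  have h2 : ptrace2 (sigmaP p) = ∑ i, c i • proj (e i) := by
    rw [hρ]
    ext a b
    simp only [ptrace2, Matrix.of_apply, Matrix.sum_apply, Matrix.smul_apply,
      Matrix.kroneckerMap_apply, smul_eq_mul]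
    rw [Finset.sum_comm]
    refine Finset.sum_congr rfl fun i _ => ?_
    rw [Finset.sum_comm]
    have : ∀ j : Fin 2, (∑ k, (q i j : ℂ) * (proj (e i) a b * proj (f j) k k))
        = (q i j : ℂ) * proj (e i) a b := by
      intro j
      rw [← Finset.mul_sum, ← Finset.mul_sum, htrF j, mul_one]
    rw [Finset.sum_congr rfl fun j _ => this j]
    rw [hc]
    push_cast
    rw [Finset.sum_mul]
  -- partial trace computed directly
  have hs2 : ((Real.sqrt 2 : ℝ) : ℂ) * ((Real.sqrt 2 : ℝ) : ℂ) = 2 := by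
    norm_cast
    exact Real.mul_self_sqrt (by norm_num)
  have h3 : ptrace2 (sigmaP p) = (p : ℂ) • proj ket0 + ((1 - p : ℝ) : ℂ) • proj ketPlus := by
    ext a b
    fin_cases a <;> fin_cases b <;>
      simp [ptrace2, sigmaP, proj, ket0, ketPlus, Matrix.vecMulVec_apply, -Matrix.cons_vecMulVec, -Matrix.vecMulVec_cons,
        Fin.sum_univ_two, Complex.ext_iff] <;>
      field_simp <;> ring_nf <;> simp [show (√2 : ℝ) ^ 4 = 4 by rw [show (4 : ℕ) = 2 * 2 from rfl, pow_mul]; norm_num] <;> ring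
  have hM : (∑ i, c i • proj (e i)) = (p : ℂ) • proj ket0 + ((1 - p : ℝ) : ℂ) • proj ketPlus := by
    rw [← h2, h3]
  have hcomm := cc_commute e f q he c
  rw [← hρ, hM] at hcomm
  -- evaluate entry ((0,0),(1,0)) of both sides
  have hent := congrArg (fun X : Matrix (Fin 2 × Fin 2) (Fin 2 × Fin 2) ℂ =>
    X ((0 : Fin 2), (0 : Fin 2)) ((1 : Fin 2), (0 : Fin 2))) hcomm
  simp only [Matrix.mul_apply, Fintype.sum_prod_type, Fin.sum_univ_two,
    Matrix.add_apply, Matrix.smul_apply, Matrix.kroneckerMap_apply, Matrix.one_apply,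
    sigmaP, proj, ket0, ketPlus, Matrix.vecMulVec_apply, smul_eq_mul] at hent
  simp only [Matrix.cons_val_zero, Matrix.cons_val_one, Matrix.head_cons, star_one, star_zero,
    Complex.star_def, map_div₀, _root_.map_one, Complex.conj_ofReal, if_true] at hent
  norm_num at hent
  have hne : ((Real.sqrt 2 : ℝ) : ℂ) ≠ 0 := by
    intro h
    rw [h] at hs2
    norm_num at hs2
  have hinv : ((Real.sqrt 2 : ℝ) : ℂ)⁻¹ * ((Real.sqrt 2 : ℝ) : ℂ)⁻¹ = 1 / 2 := by
    rw [← mul_inv, hs2]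
    norm_num
  simp only [hinv] at hent
  have hpc : (p : ℂ) * (1 - p) = 0 := by linear_combination (-4 : ℂ) * hent
  have hpr : p * (1 - p) = 0 := by exact_mod_cast hpc
  have := mul_pos hp0 (sub_pos.mpr hp1)
  rw [hpr] at this
  exact lt_irrefl 0 this
end

section
/- Let |0⟩, |1⟩ be the standard basis of ℂ² and |+⟩ = (|0⟩ + |1⟩)/√2, and fix 0 < p < 1. Consider the four-qubit density matrix ρ = p (|0⟩⟨0| ⊗ |0⟩⟨0|) ⊗ (|0⟩⟨0| ⊗ |0⟩⟨0|) + (1−p) (|1⟩⟨1| ⊗ |+⟩⟨+|) ⊗ (|+⟩⟨+| ⊗ |1⟩⟨1|) on (ℂ² ⊗ ℂ²) ⊗ (ℂ² ⊗ ℂ²), with bipartition A = first two qubits, B = last two qubits. Then: (i) ρ is classically correlated with respect to the bipartition A | B; and (ii) the partial trace of ρ over the first and fourth qubits equals σ_p = p |0⟩⟨0| ⊗ |0⟩⟨0| + (1−p) |+⟩⟨+| ⊗ |+⟩⟨+| on ℂ² ⊗ ℂ², which is not classically correlated. Hence ρ is a classically correlated state with a quantum correlated reduction that preserves the local bipartition.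 -/
open Matrix
open scoped Kronecker ComplexOrder

/-- The extended state `η ⊗ ρ ⊗ η`, where `η = |0⟩⟨0|` is the rank-one projector onto
the first standard basis vector of `ℂ^d`, on `(ℂ^d ⊗ α) ⊗ (β ⊗ ℂ^d)`. -/
noncomputable def extAnc {α β : Type*} (d : ℕ)
    (ρ : Matrix (α × β) (α × β) ℂ) :
    Matrix ((Fin d × α) × (β × Fin d)) ((Fin d × α) × (β × Fin d)) ℂ :=
  Matrix.of fun p q =>
    (if p.1.1.val = 0 ∧ q.1.1.val = 0 then (1 : ℂ) else 0) *
      ρ (p.1.2, p.2.1) (q.1.2, q.2.1) *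
      (if p.2.2.val = 0 ∧ q.2.2.val = 0 then (1 : ℂ) else 0)

/-- Partial trace over the two ancillary factors (the first and the fourth). -/
noncomputable def ptraceAnc {α β : Type*} {d : ℕ}
    (X : Matrix ((Fin d × α) × (β × Fin d)) ((Fin d × α) × (β × Fin d)) ℂ) :
    Matrix (α × β) (α × β) ℂ :=
  Matrix.of fun p q => ∑ a : Fin d, ∑ b : Fin d,
    X ((a, p.1), (p.2, b)) ((a, q.1), (q.2, b))

/-- The four-qubit state
`ρ = p (|0⟩⟨0| ⊗ |0⟩⟨0|) ⊗ (|0⟩⟨0| ⊗ |0⟩⟨0|)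
   + (1−p) (|1⟩⟨1| ⊗ |+⟩⟨+|) ⊗ (|+⟩⟨+| ⊗ |1⟩⟨1|)`
on `(ℂ² ⊗ ℂ²) ⊗ (ℂ² ⊗ ℂ²)`, with `A` the first two qubits and `B` the last two. -/
noncomputable def rhoFour (p : ℝ) :
    Matrix ((Fin 2 × Fin 2) × (Fin 2 × Fin 2)) ((Fin 2 × Fin 2) × (Fin 2 × Fin 2)) ℂ :=
  (p : ℂ) • ((proj ket0 ⊗ₖ proj ket0) ⊗ₖ (proj ket0 ⊗ₖ proj ket0)) +
    ((1 - p : ℝ) : ℂ) • ((proj ket1 ⊗ₖ proj ketPlus) ⊗ₖ (proj ketPlus ⊗ₖ proj ket1))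

/-! ### Auxiliary lemmas -/

lemma h2c : ((Real.sqrt 2 : ℝ) : ℂ) * ((Real.sqrt 2 : ℝ) : ℂ) = 2 := by
  rw [← Complex.ofReal_mul, Real.mul_self_sqrt (by norm_num)]; norm_num

lemma hinv : ((Real.sqrt 2 : ℝ) : ℂ)⁻¹ * ((Real.sqrt 2 : ℝ) : ℂ)⁻¹ = 1/2 := by
  rw [← mul_inv, h2c]; norm_num

lemma hplus : proj ketPlus = Matrix.of fun _ _ => (1/2 : ℂ) := by
  ext i j
  fin_cases i <;> fin_cases j <;>
    simp [proj, vecMulVec, ketPlus, Complex.ext_iff] <;>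
    rw [div_mul_div_comm, Real.mul_self_sqrt (by norm_num)] <;> norm_num

lemma h0 : proj ket0 = !![1,0;0,0] := by
  ext i j; fin_cases i <;> fin_cases j <;> simp [proj, vecMulVec, ket0]

lemma h1 : proj ket1 = !![0,0;0,1] := by
  ext i j; fin_cases i <;> fin_cases j <;> simp [proj, vecMulVec, ket1]

lemma proj_mul_proj_s7 {N : Type*} [Fintype N] (v w : N → ℂ) :
    proj v * proj w = (∑ k, star (v k) * w k) • Matrix.vecMulVec v (star w) := by
  ext i j
  simp only [proj, Matrix.mul_apply, Matrix.vecMulVec_apply, Matrix.smul_apply,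
    Pi.star_apply, smul_eq_mul, Finset.sum_mul]
  exact Finset.sum_congr rfl fun k _ => by ring

lemma onb_proj_mul {N : Type*} [Fintype N] [DecidableEq N] {e : N → N → ℂ}
    (he : Onb e) (i j : N) :
    proj (e i) * proj (e j) = if i = j then proj (e i) else 0 := by
  rw [proj_mul_proj_s7, he i j]
  split
  · next h => subst h; rw [one_smul]; rfl
  · rw [zero_smul]

lemma trace_diag_proj {N : Type*} [Fintype N] [DecidableEq N] {e : N → N → ℂ}
    (he : Onb e) (j : N) : ∑ k, proj (e j) k k = 1 := by
  have h := he j j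
  rw [if_pos rfl] at h
  rw [← h]
  exact Finset.sum_congr rfl fun k _ => by
    simp only [proj, Matrix.vecMulVec_apply, Pi.star_apply]; ring

lemma sum_kron {ι α β : Type*} (s : Finset ι)
    (A : ι → Matrix α α ℂ) (B : Matrix β β ℂ) :
    (∑ i ∈ s, A i) ⊗ₖ B = ∑ i ∈ s, A i ⊗ₖ B := by
  ext x y
  simp [Matrix.sum_apply, Finset.sum_mul]

lemma cc_comm {α β : Type*} [Fintype α] [DecidableEq α] [Fintype β] [DecidableEq β]
    {σ : Matrix (α × β) (α × β) ℂ} (h : IsCC σ) :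
    σ * ((ptrace2 σ) ⊗ₖ (1 : Matrix β β ℂ)) = ((ptrace2 σ) ⊗ₖ 1) * σ := by
  obtain ⟨e, f, q, he, hf, hq0, hqs, rfl⟩ := h
  have hpt : ptrace2 (∑ i, ∑ j, ((q i j : ℂ)) • (proj (e i) ⊗ₖ proj (f j)))
      = ∑ i, ∑ j, ((q i j : ℂ)) • proj (e i) := by
    ext a a'
    simp only [ptrace2, Matrix.of_apply, Matrix.sum_apply, Matrix.smul_apply,
      Matrix.kroneckerMap_apply, smul_eq_mul]
    rw [Finset.sum_comm]
    refine Finset.sum_congr rfl fun i _ => ?_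
    rw [Finset.sum_comm]
    refine Finset.sum_congr rfl fun j _ => ?_
    rw [← Finset.mul_sum, ← Finset.mul_sum, trace_diag_proj hf, mul_one]
  rw [hpt]
  have e1 : (∑ i, ∑ j, ((q i j : ℂ)) • (proj (e i) ⊗ₖ proj (f j)))
      = ∑ x : α × β, ((q x.1 x.2 : ℂ)) • (proj (e x.1) ⊗ₖ proj (f x.2)) :=
    (Fintype.sum_prod_type
      (fun x : α × β => ((q x.1 x.2 : ℂ)) • (proj (e x.1) ⊗ₖ proj (f x.2)))).symm
  have e2 : (∑ i, ∑ j, ((q i j : ℂ)) • proj (e i))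
      = ∑ x : α × β, ((q x.1 x.2 : ℂ)) • proj (e x.1) :=
    (Fintype.sum_prod_type (fun x : α × β => ((q x.1 x.2 : ℂ)) • proj (e x.1))).symm
  rw [e1, e2, sum_kron]
  have e3 : ∀ x : α × β, (((q x.1 x.2 : ℂ)) • proj (e x.1)) ⊗ₖ (1 : Matrix β β ℂ)
      = ((q x.1 x.2 : ℂ)) • (proj (e x.1) ⊗ₖ (1 : Matrix β β ℂ)) :=
    fun x => Matrix.smul_kronecker _ _ _
  simp only [e3]
  rw [Finset.sum_mul_sum, Finset.sum_mul_sum, Finset.sum_comm]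
  refine Finset.sum_congr rfl fun r _ => Finset.sum_congr rfl fun s _ => ?_
  rw [smul_mul_assoc, mul_smul_comm, smul_mul_assoc, mul_smul_comm,
    ← Matrix.mul_kronecker_mul, ← Matrix.mul_kronecker_mul, Matrix.mul_one, Matrix.one_mul,
    onb_proj_mul he, onb_proj_mul he]
  rcases eq_or_ne s.1 r.1 with hh | hh
  · rw [if_pos hh, if_pos hh.symm, hh, smul_comm]
  · rw [if_neg hh, if_neg (Ne.symm hh)]
    simp [Matrix.zero_kronecker]

lemma proj_prod {α β : Type*} (v : α → ℂ) (w : β → ℂ) :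
    proj (fun k : α × β => v k.1 * w k.2) = proj v ⊗ₖ proj w := by
  ext x y
  simp only [proj, Matrix.vecMulVec_apply, Pi.star_apply, Matrix.kroneckerMap_apply,
    star_mul']
  ring

noncomputable def ketMinus : Fin 2 → ℂ := ![1 / (Real.sqrt 2 : ℂ), -(1 / (Real.sqrt 2 : ℂ))]

noncomputable def bA : Fin 2 → Fin 2 → Fin 2 → ℂ := ![![ket0, ket1], ![ketPlus, ketMinus]]

noncomputable def eBasis : Fin 2 × Fin 2 → Fin 2 × Fin 2 → ℂ :=
  fun i k => ![ket0, ket1] i.1 k.1 * bA i.1 i.2 k.2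

noncomputable def fBasis : Fin 2 × Fin 2 → Fin 2 × Fin 2 → ℂ :=
  fun j k => eBasis (j.2, j.1) (k.2, k.1)

lemma onb_e : Onb eBasis := by
  rintro ⟨i1, i2⟩ ⟨j1, j2⟩
  fin_cases i1 <;> fin_cases i2 <;> fin_cases j1 <;> fin_cases j2 <;>
    simp [eBasis, bA, ket0, ket1, ketPlus, ketMinus, Fintype.sum_prod_type,
      Fin.sum_univ_two, Prod.ext_iff, div_mul_div_comm, h2c] <;>
    ring_nf <;>
    norm_num [sq, h2c, hinv]

lemma onb_f : Onb fBasis := by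
  intro i j
  have h := onb_e (i.2, i.1) (j.2, j.1)
  rw [show (∑ k : Fin 2 × Fin 2, star (fBasis i k) * fBasis j k)
      = ∑ k : Fin 2 × Fin 2, star (eBasis (i.2, i.1) k) * eBasis (j.2, j.1) k from
    Fintype.sum_equiv (Equiv.prodComm _ _) _ _ (fun k => rfl), h]
  simp [Prod.ext_iff, and_comm]



/-- For `0 < p < 1`: (i) `ρ = rhoFour p` is classically correlated with
respect to the bipartition `A | B` (first two qubits | last two qubits); (ii) its partial
trace over the first and fourth qubits equals
`σ_p = p |0⟩⟨0| ⊗ |0⟩⟨0| + (1−p) |+⟩⟨+| ⊗ |+⟩⟨+|`, which is not classically correlated.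
Hence `ρ` is a CC state with a quantum-correlated reduction preserving the bipartition. -/

theorem statement7 (p : ℝ) (hp0 : 0 < p) (hp1 : p < 1) :
    IsCC (rhoFour p) ∧
      ptraceAnc (rhoFour p) = sigmaP p ∧
      ¬ IsCC (sigmaP p) := by
  refine ⟨?_, ?_, ?_⟩
  · -- classically correlated
    refine ⟨eBasis, fBasis,
      (fun i j => if i = ((0 : Fin 2), (0 : Fin 2)) ∧ j = ((0 : Fin 2), (0 : Fin 2)) then p
        else if i = ((1 : Fin 2), (0 : Fin 2)) ∧ j = ((0 : Fin 2), (1 : Fin 2)) then 1 - p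
        else 0),
      onb_e, onb_f, ?_, ?_, ?_⟩
    · intro i j
      dsimp only
      split
      · linarith
      · split
        · linarith
        · exact le_refl 0
    · simp only [Fintype.sum_prod_type, Fin.sum_univ_two, Prod.mk.injEq]
      norm_num
    · have he00 : eBasis (0, 0) = fun k => ket0 k.1 * ket0 k.2 := by
        funext k; simp [eBasis, bA]
      have he10 : eBasis (1, 0) = fun k => ket1 k.1 * ketPlus k.2 := by
        funext k; simp [eBasis, bA]
      have hf00 : fBasis (0, 0) = fun k => ket0 k.1 * ket0 k.2 := by
        funext k; simp [fBasis, eBasis, bA]; ring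
      have hf01 : fBasis (0, 1) = fun k => ketPlus k.1 * ket1 k.2 := by
        funext k; simp [fBasis, eBasis, bA]; ring
      have expand : (∑ i : Fin 2 × Fin 2, ∑ j : Fin 2 × Fin 2,
          ((if i = ((0 : Fin 2), (0 : Fin 2)) ∧ j = ((0 : Fin 2), (0 : Fin 2)) then p
            else if i = ((1 : Fin 2), (0 : Fin 2)) ∧ j = ((0 : Fin 2), (1 : Fin 2)) then 1 - p
            else 0 : ℝ) : ℂ) • (proj (eBasis i) ⊗ₖ proj (fBasis j)))
          = (p : ℂ) • (proj (eBasis (0, 0)) ⊗ₖ proj (fBasis (0, 0))) +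
            ((1 - p : ℝ) : ℂ) • (proj (eBasis (1, 0)) ⊗ₖ proj (fBasis (0, 1))) := by
        simp [Fintype.sum_prod_type, Fin.sum_univ_two, Prod.ext_iff]
        norm_cast
      rw [expand, he00, he10, hf00, hf01]
      simp only [proj_prod, rhoFour]
  · -- partial trace
    ext x y
    obtain ⟨i1, i2⟩ := x; obtain ⟨j1, j2⟩ := y
    simp only [ptraceAnc, rhoFour, sigmaP, hplus, h0, h1, Matrix.of_apply, Matrix.add_apply,
      Matrix.smul_apply, Matrix.kroneckerMap_apply, smul_eq_mul, Fin.sum_univ_two]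
    fin_cases i1 <;> fin_cases i2 <;> fin_cases j1 <;> fin_cases j2 <;> simp
  · -- not CC
    intro hCC
    have key := cc_comm hCC
    have h := congrFun (congrFun key ((0 : Fin 2), (0 : Fin 2))) ((1 : Fin 2), (1 : Fin 2))
    rw [Matrix.mul_apply, Matrix.mul_apply] at h
    simp only [sigmaP, hplus, h0, ptrace2, Matrix.of_apply, Matrix.add_apply, Matrix.smul_apply,
      Matrix.kroneckerMap_apply, Matrix.one_apply, smul_eq_mul, Fintype.sum_prod_type,
      Fin.sum_univ_two] at h
    norm_num at h
    have h' : (((1 - p)^2 : ℝ) : ℂ) = ((1 - p : ℝ) : ℂ) := by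
      push_cast
      linear_combination 4 * h
    have h'' : (1 - p)^2 = 1 - p := by exact_mod_cast h'
    nlinarith
end

section
/- Let ρ be a density matrix on (ℂ^{m1} ⊗ ℂ^{m2}) ⊗ (ℂ^{n1} ⊗ ℂ^{n2}), viewed as bipartite with A = ℂ^{m1} ⊗ ℂ^{m2} and B = ℂ^{n1} ⊗ ℂ^{n2}. Let Q be a function from density matrices on A ⊗ B to ℝ and q a function from density matrices on ℂ^{m1} ⊗ ℂ^{n1} to ℝ such that Q(ι(σ)) = q(σ) for every density matrix σ on ℂ^{m1} ⊗ ℂ^{n1}, where ι(σ) denotes the state on (ℂ^{m1} ⊗ ℂ^{m2}) ⊗ (ℂ^{n1} ⊗ ℂ^{n2}) obtained by placing σ on the ℂ^{m1} and ℂ^{n1} factors and the pure states |0⟩⟨0| on the ℂ^{m2} and ℂ^{n2} factors. If m2 ≤ d and n2 ≤ d, then PQ_d(ρ) ≥ q(Tr_{A2,B2}(ρ)), where Tr_{A2,B2}(ρ) is the partial trace of ρ over the ℂ^{m2} and ℂ^{n2} factors. -/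
open Matrix
open scoped Kronecker ComplexOrder

/-- Partial trace over the second local factor on each side: from
`(α₁ ⊗ α₂) ⊗ (β₁ ⊗ β₂)` down to `α₁ ⊗ β₁`. -/
noncomputable def ptraceInner {α1 α2 β1 β2 : Type*} [Fintype α2] [Fintype β2]
    (X : Matrix ((α1 × α2) × (β1 × β2)) ((α1 × α2) × (β1 × β2)) ℂ) :
    Matrix (α1 × β1) (α1 × β1) ℂ :=
  Matrix.of fun p q => ∑ a2 : α2, ∑ b2 : β2,
    X ((p.1, a2), (p.2, b2)) ((q.1, a2), (q.2, b2))

/-- The embedding `ι(σ)` placing `σ` on the `ℂ^{m1}`, `ℂ^{n1}` factors and the pure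
states `|0⟩⟨0|` on the `ℂ^{m2}`, `ℂ^{n2}` factors. -/
noncomputable def iotaEmb {m1 m2 n1 n2 : ℕ}
    (σ : Matrix (Fin m1 × Fin n1) (Fin m1 × Fin n1) ℂ) :
    Matrix ((Fin m1 × Fin m2) × (Fin n1 × Fin n2))
      ((Fin m1 × Fin m2) × (Fin n1 × Fin n2)) ℂ :=
  Matrix.of fun p q =>
    σ (p.1.1, p.2.1) (q.1.1, q.2.1) *
      (if p.1.2.val = 0 ∧ q.1.2.val = 0 then (1 : ℂ) else 0) *
      (if p.2.2.val = 0 ∧ q.2.2.val = 0 then (1 : ℂ) else 0)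


/-! ### Auxiliary material for `statement11` -/

lemma sum_castLE' {M : Type*} [AddCommMonoid M] {d m : ℕ} (h : m ≤ d) (f : Fin d → M)
    (hf : ∀ k : Fin d, ¬ k.val < m → f k = 0) :
    ∑ k, f k = ∑ a : Fin m, f (Fin.castLE h a) := by
  have hmap : ∑ a : Fin m, f (Fin.castLE h a) = ∑ x ∈ Finset.univ.map (Fin.castLEEmb h), f x :=
    (Finset.sum_map Finset.univ (Fin.castLEEmb h) f).symm
  rw [hmap]
  refine (Finset.sum_subset (Finset.subset_univ _) ?_).symm
  intro x _ hx
  refine hf x fun hlt => hx ?_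
  simp only [Finset.mem_map, Finset.mem_univ, true_and]
  exact ⟨⟨x.val, hlt⟩, rfl⟩

/-- The Kraus operator `|i1,0⟩⟨i1,k|` (extended by zero when `k ≥ m2`). -/
noncomputable def embK' (m1 m2 : ℕ) {d : ℕ} (k : Fin d) :
    Matrix (Fin m1 × Fin m2) (Fin m1 × Fin m2) ℂ :=
  Matrix.of fun p r => if p.1 = r.1 ∧ p.2.val = 0 ∧ r.2.val = k.val then 1 else 0

lemma embK'_sum (m1 : ℕ) {m2 d : ℕ} (h : m2 ≤ d) (h0 : 0 < m2) :
    ∑ k : Fin d, (embK' m1 m2 k)ᴴ * embK' m1 m2 k = 1 := by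
  ext ⟨q1, q2⟩ ⟨r1, r2⟩
  simp only [Matrix.sum_apply, Matrix.mul_apply, Matrix.conjTranspose_apply, embK',
    Matrix.of_apply, Fintype.sum_prod_type, apply_ite (star (R := ℂ)), star_one, star_zero,
    ite_mul, zero_mul, one_mul, Matrix.one_apply]
  have e0 : ∀ x2 : Fin m2, ((x2 : ℕ) = 0) = (x2 = ⟨0, h0⟩) := by
    intro x2; simp [Fin.ext_iff]
  have eq2 : ∀ x : Fin d, ((q2 : ℕ) = (x : ℕ)) = (x = Fin.castLE h q2) := by
    intro x; simp [Fin.ext_iff, eq_comm]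
  have er2 : ∀ x : Fin d, ((r2 : ℕ) = (x : ℕ)) = (x = Fin.castLE h r2) := by
    intro x; simp [Fin.ext_iff, eq_comm]
  simp only [e0, eq2, er2]
  rw [Finset.sum_eq_single (Fin.castLE h q2)]
  · rw [Finset.sum_eq_single q1]
    · rw [Finset.sum_eq_single (⟨0, h0⟩ : Fin m2)]
      · simp [Prod.ext_iff, Fin.ext_iff]
      · intro b _ hb; simp [hb]
      · simp
    · intro b _ hb; simp [hb]
    · simp
  · intro b _ hb; simp [hb]
  · simp

set_option maxHeartbeats 2000000 in
lemma localKraus_embK' {m1 m2 n1 n2 d : ℕ} (hm2 : m2 ≤ d) (hn2 : n2 ≤ d)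
    (ρ : Matrix ((Fin m1 × Fin m2) × (Fin n1 × Fin n2))
      ((Fin m1 × Fin m2) × (Fin n1 × Fin n2)) ℂ) :
    localKraus (embK' m1 m2 (d := d)) (embK' n1 n2 (d := d)) ρ = iotaEmb (ptraceInner ρ) := by
  ext ⟨⟨p11, p12⟩, ⟨p21, p22⟩⟩ ⟨⟨q11, q12⟩, ⟨q21, q22⟩⟩
  simp only [localKraus, Matrix.sum_apply, Matrix.mul_apply, Matrix.conjTranspose_apply,
    Matrix.kroneckerMap_apply, embK', Matrix.of_apply, Fintype.sum_prod_type,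
    apply_ite (star (R := ℂ)), star_one, star_zero, ite_mul, zero_mul, one_mul,
    mul_ite, mul_zero, mul_one]
  rw [sum_castLE' hm2 _ ?hzA]
  case hzA =>
    intro k hk
    refine Finset.sum_eq_zero fun l _ => Finset.sum_eq_zero fun x2 _ =>
      Finset.sum_eq_zero fun x3 _ => ?_
    have h3 : ¬ ((x3 : ℕ) = (k : ℕ)) := by have := x3.isLt; omega
    simp [h3]
  refine Eq.trans (Finset.sum_congr rfl fun a2 _ => sum_castLE' hn2 _ ?_) ?_
  · intro l hl
    refine Finset.sum_eq_zero fun x2 _ => Finset.sum_eq_zero fun x3 _ =>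
      Finset.sum_eq_zero fun x4 _ => Finset.sum_eq_zero fun x5 _ => ?_
    have h5 : ¬ ((x5 : ℕ) = (l : ℕ)) := by have := x5.isLt; omega
    simp [h5]
  have eA : ∀ (a2 x1 : Fin m2), ((x1:ℕ) = ((Fin.castLE hm2 a2 : Fin d) : ℕ)) = (x1 = a2) := by
    intro a2 x1; simp [Fin.ext_iff]
  have eB : ∀ (b2 x1 : Fin n2), ((x1:ℕ) = ((Fin.castLE hn2 b2 : Fin d) : ℕ)) = (x1 = b2) := by
    intro b2 x1; simp [Fin.ext_iff]
  simp only [eA, eB, ite_and]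
  simp only [Finset.sum_ite_irrel, Finset.sum_ite_eq', Finset.sum_ite_eq,
    Finset.mem_univ, if_true, Finset.sum_const_zero]
  simp only [iotaEmb, ptraceInner, Matrix.of_apply, mul_ite, mul_one, mul_zero]
  split_ifs <;> tauto

lemma posSemidef_sum' {N ι : Type*} [Fintype N] (s : Finset ι) (f : ι → Matrix N N ℂ)
    (h : ∀ i ∈ s, (f i).PosSemidef) : (∑ i ∈ s, f i).PosSemidef := by
  classical
  refine Finset.sum_induction f _ (fun a b ha hb => ha.add hb) Matrix.PosSemidef.zero h

/-- The selection matrix extracting the `(a2, b2)` block. -/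
noncomputable def selB' {α1 α2 β1 β2 : Type*} [DecidableEq α2] [DecidableEq β2]
    [DecidableEq α1] [DecidableEq β1] (a2 : α2) (b2 : β2) :
    Matrix (α1 × β1) ((α1 × α2) × (β1 × β2)) ℂ :=
  Matrix.of fun p r => if r = ((p.1, a2), (p.2, b2)) then 1 else 0

lemma ptraceInner_eq_sum' {α1 α2 β1 β2 : Type*} [Fintype α1] [Fintype α2] [Fintype β1]
    [Fintype β2] [DecidableEq α1] [DecidableEq α2] [DecidableEq β1] [DecidableEq β2]
    (ρ : Matrix ((α1 × α2) × (β1 × β2)) ((α1 × α2) × (β1 × β2)) ℂ) :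
    ptraceInner ρ = ∑ a2 : α2, ∑ b2 : β2, selB' (α1 := α1) (β1 := β1) a2 b2 * ρ * (selB' (α1 := α1) (β1 := β1) a2 b2)ᴴ := by
  ext p q
  simp only [ptraceInner, Matrix.of_apply, Matrix.sum_apply, Matrix.mul_apply,
    Matrix.conjTranspose_apply, selB', apply_ite (star (R := ℂ)), star_one, star_zero,
    ite_mul, zero_mul, one_mul, mul_ite, mul_zero, mul_one]
  refine Finset.sum_congr rfl fun a2 _ => Finset.sum_congr rfl fun b2 _ => ?_
  rw [Finset.sum_eq_single ((q.1, a2), (q.2, b2))]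
  · rw [Finset.sum_eq_single ((p.1, a2), (p.2, b2))]
    · simp
    · intro b _ hb; simp [hb]
    · simp
  · intro b _ hb; simp [hb]
  · simp

open scoped ComplexOrder in
lemma ptraceInner_density' {α1 α2 β1 β2 : Type*} [Fintype α1] [Fintype α2] [Fintype β1]
    [Fintype β2] [DecidableEq α1] [DecidableEq α2] [DecidableEq β1] [DecidableEq β2]
    (ρ : Matrix ((α1 × α2) × (β1 × β2)) ((α1 × α2) × (β1 × β2)) ℂ)
    (hρ : IsDensity ρ) : IsDensity (ptraceInner ρ) := by
  obtain ⟨hpsd, htr⟩ := hρ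
  constructor
  · rw [ptraceInner_eq_sum']
    refine posSemidef_sum' _ _ fun a2 _ => posSemidef_sum' _ _ fun b2 _ => ?_
    exact hpsd.mul_mul_conjTranspose_same _
  · rw [← htr]
    simp only [Matrix.trace, Matrix.diag, ptraceInner, Matrix.of_apply,
      Fintype.sum_prod_type]
    exact Finset.sum_congr rfl fun x _ => Finset.sum_comm

lemma trace_pos_dim {m1 m2 n1 n2 : ℕ}
    (ρ : Matrix ((Fin m1 × Fin m2) × (Fin n1 × Fin n2))
      ((Fin m1 × Fin m2) × (Fin n1 × Fin n2)) ℂ)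
    (htr : ρ.trace = 1) : 0 < m2 ∧ 0 < n2 := by
  constructor
  · rcases Nat.eq_zero_or_pos m2 with h | h
    · exfalso; subst h
      simp [Matrix.trace] at htr
    · exact h
  · rcases Nat.eq_zero_or_pos n2 with h | h
    · exfalso; subst h
      simp [Matrix.trace] at htr
    · exact h

/-- Let `ρ` be a density matrix on
`(ℂ^{m1} ⊗ ℂ^{m2}) ⊗ (ℂ^{n1} ⊗ ℂ^{n2})`, `Q` a measure on `A ⊗ B` and `q` a measure on
`ℂ^{m1} ⊗ ℂ^{n1}` with `Q(ι(σ)) = q(σ)` for all density matrices `σ`.  If `m2 ≤ d` and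
`n2 ≤ d`, then `PQ_d(ρ) ≥ q(Tr_{A2,B2}(ρ))`. -/
theorem statement11 {m1 m2 n1 n2 : ℕ}
    (Q : Matrix ((Fin m1 × Fin m2) × (Fin n1 × Fin n2))
      ((Fin m1 × Fin m2) × (Fin n1 × Fin n2)) ℂ → ℝ)
    (q : Matrix (Fin m1 × Fin n1) (Fin m1 × Fin n1) ℂ → ℝ)
    (hQq : ∀ σ, IsDensity σ → Q (iotaEmb σ) = q σ)
    (d : ℕ) (hm2 : m2 ≤ d) (hn2 : n2 ≤ d)
    (ρ : Matrix ((Fin m1 × Fin m2) × (Fin n1 × Fin n2))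
      ((Fin m1 × Fin m2) × (Fin n1 × Fin n2)) ℂ)
    (hρ : IsDensity ρ) :
    (q (ptraceInner ρ) : EReal) ≤ PQ d Q ρ := by
  obtain ⟨h0m2, h0n2⟩ := trace_pos_dim ρ hρ.2
  have hdens : IsDensity (ptraceInner ρ) := ptraceInner_density' ρ hρ
  refine le_sSup ?_
  refine ⟨localKraus (embK' m1 m2 (d := d)) (embK' n1 n2 (d := d)),
    ⟨embK' m1 m2 (d := d), embK' n1 n2 (d := d),
      embK'_sum m1 hm2 h0m2, embK'_sum n1 hn2 h0n2, fun σ => rfl⟩, ?_⟩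
  rw [localKraus_embK' hm2 hn2 ρ, hQq _ hdens]
end

section
/- For every pure density matrix ρ = |ψ⟩⟨ψ| on ℂ^m ⊗ ℂ^n, the quantum discord with measurements on the first subsystem equals the entropy of entanglement: δ(ρ) = S(Tr_2(ρ)). In particular, the optimal measurement achieves sup_Π I(Π[ρ]) = S(Tr_2(ρ)), while I(ρ) = 2 S(Tr_2(ρ)). -/
open Matrix
open scoped Kronecker ComplexOrder

/-- The von Neumann entropy `S(ρ) = −Σ λ_k log λ_k` of a (Hermitian) matrix, via its
eigenvalues; junk value `0` on non-Hermitian matrices. -/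
noncomputable def vnEntropy {N : Type*} [Fintype N] [DecidableEq N]
    (ρ : Matrix N N ℂ) : ℝ :=
  if h : ρ.IsHermitian then ∑ k, Real.negMulLog (h.eigenvalues k) else 0

/-- The quantum mutual information `I(ρ) = S(ρ_A) + S(ρ_B) − S(ρ)`. -/
noncomputable def mutualInfo {α β : Type*} [Fintype α] [DecidableEq α] [Fintype β]
    [DecidableEq β] (ρ : Matrix (α × β) (α × β) ℂ) : ℝ :=
  vnEntropy (ptrace2 ρ) + vnEntropy (ptrace1 ρ) - vnEntropy ρ

/-- The post-measurement state `Π[ρ] = Σ_i (Π_i ⊗ I) ρ (Π_i ⊗ I)` for the projective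
rank-one measurement on the first subsystem given by the orthonormal basis `e`. -/
noncomputable def postMeas {α β : Type*} [Fintype α] [DecidableEq α] [Fintype β]
    [DecidableEq β] (e : α → α → ℂ) (ρ : Matrix (α × β) (α × β) ℂ) :
    Matrix (α × β) (α × β) ℂ :=
  ∑ i, (proj (e i) ⊗ₖ (1 : Matrix β β ℂ)) * ρ * (proj (e i) ⊗ₖ (1 : Matrix β β ℂ))

/-- The quantum discord with measurements on the first subsystem:
`δ(ρ) = I(ρ) − sup_Π I(Π[ρ])`, the supremum running over all projective rank-one
measurements (orthonormal bases) of the first subsystem. -/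
noncomputable def discord {α β : Type*} [Fintype α] [DecidableEq α] [Fintype β]
    [DecidableEq β] (ρ : Matrix (α × β) (α × β) ℂ) : ℝ :=
  mutualInfo ρ - sSup {x : ℝ | ∃ e, Onb e ∧ x = mutualInfo (postMeas e ρ)}


section ProofHelpers
open Polynomial


variable {ι κ : Type*} [Fintype ι] [DecidableEq ι] [Fintype κ] [DecidableEq κ]

lemma myDetComm {R : Type*} [CommRing R] (A : Matrix ι κ R) (B : Matrix κ ι R) (x : R) :
    det (x • (1 : Matrix ι ι R) - A * B) * x ^ Fintype.card κ =
      x ^ Fintype.card ι * det (x • (1 : Matrix κ κ R) - B * A) := by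
  have h1 : (fromBlocks (x • 1) A B 1) * (fromBlocks 1 0 (-B) (x • (1 : Matrix κ κ R)))
      = fromBlocks (x • 1 - A * B) (x • A) 0 (x • 1) := by
    simp [fromBlocks_multiply, Matrix.smul_mul, Matrix.mul_smul, sub_eq_add_neg,
      Matrix.mul_neg]
  have h2 : (fromBlocks 1 0 (-B) (x • (1 : Matrix κ κ R))) * (fromBlocks (x • 1) A B 1)
      = fromBlocks (x • 1) A 0 (x • 1 - B * A) := by
    simp [fromBlocks_multiply, Matrix.smul_mul, Matrix.mul_smul, sub_eq_add_neg,
      Matrix.neg_mul, add_comm]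
  have key : det (fromBlocks (x • 1 - A * B) (x • A) 0 (x • (1 : Matrix κ κ R)))
      = det (fromBlocks (x • (1 : Matrix ι ι R)) A 0 (x • 1 - B * A)) := by
    rw [← h1, ← h2, det_mul, det_mul, mul_comm]
  simpa [det_fromBlocks_zero₂₁, det_smul, det_one] using key

lemma myCharmatrix (M : Matrix ι ι ℂ) :
    charmatrix M = (X : ℂ[X]) • (1 : Matrix ι ι ℂ[X]) - M.map C := by
  ext i j
  by_cases h : i = j <;>
    simp [h, charmatrix_apply_eq, charmatrix_apply_ne, Matrix.one_apply, Matrix.map_apply]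

lemma myCharpolyRect (A : Matrix ι κ ℂ) (B : Matrix κ ι ℂ) :
    (A * B).charpoly * X ^ Fintype.card κ = X ^ Fintype.card ι * (B * A).charpoly := by
  have hAB : charmatrix (A * B) = (X : ℂ[X]) • 1 - (A.map C) * (B.map C) := by
    rw [myCharmatrix, Matrix.map_mul]
  have hBA : charmatrix (B * A) = (X : ℂ[X]) • 1 - (B.map C) * (A.map C) := by
    rw [myCharmatrix, Matrix.map_mul]
  rw [Matrix.charpoly, Matrix.charpoly, hAB, hBA]
  exact myDetComm (A.map C) (B.map C) X

lemma myCharpolySq (A B : Matrix ι ι ℂ) : (A * B).charpoly = (B * A).charpoly := by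
  have h := myCharpolyRect A B
  rw [mul_comm ((A * B).charpoly)] at h
  exact mul_left_cancel₀ (pow_ne_zero _ X_ne_zero) h

lemma myCharpolyDiag (d : ι → ℂ) : (diagonal d).charpoly = ∏ i, (X - C (d i)) := by
  have : charmatrix (diagonal d) = diagonal (fun i => X - C (d i)) := by
    ext i j
    by_cases h : i = j <;>
      simp [h, charmatrix_apply_eq, charmatrix_apply_ne, diagonal_apply_ne]
  rw [Matrix.charpoly, this, det_diagonal]

lemma myCharpolyHerm {H : Matrix ι ι ℂ} (hH : H.IsHermitian) :
    H.charpoly = ∏ i, (X - C ((hH.eigenvalues i : ℝ) : ℂ)) := by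
  have hU : (star (hH.eigenvectorUnitary : Matrix ι ι ℂ)) *
      (hH.eigenvectorUnitary : Matrix ι ι ℂ) = 1 := by
    exact Unitary.coe_star_mul_self _
  conv_lhs => rw [hH.spectral_theorem, Unitary.conjStarAlgAut_apply]
  rw [myCharpolySq, ← mul_assoc, hU, one_mul, myCharpolyDiag]
  rfl



lemma myEntropyGram {N J : Type*} [Fintype N] [DecidableEq N] [Fintype J] [DecidableEq J]
    (W : Matrix N J ℂ) (d : J → ℝ)
    (hW : Wᴴ * W = diagonal (fun j => (d j : ℂ))) :
    vnEntropy (W * Wᴴ) = ∑ j, Real.negMulLog (d j) := by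
  have hH : (W * Wᴴ).IsHermitian := isHermitian_mul_conjTranspose_self W
  have hch := myCharpolyRect W Wᴴ
  rw [myCharpolyHerm hH, hW, myCharpolyDiag] at hch
  set S1 : Multiset ℂ :=
    (Finset.univ.val.map fun k => ((hH.eigenvalues k : ℝ) : ℂ)) +
      Multiset.replicate (Fintype.card J) 0 with hS1
  set S2 : Multiset ℂ :=
    (Finset.univ.val.map fun j => ((d j : ℝ) : ℂ)) +
      Multiset.replicate (Fintype.card N) 0 with hS2
  have h1 : (S1.map fun a => X - C a).prod = (S2.map fun a => X - C a).prod := by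
    rw [hS1, hS2]
    simp only [Multiset.map_add, Multiset.prod_add, Multiset.map_map, Multiset.map_replicate,
      Multiset.prod_replicate, Function.comp_def, map_zero, sub_zero]
    rw [← Finset.prod_eq_multiset_prod, ← Finset.prod_eq_multiset_prod]
    rw [hch, mul_comm]
  have hS : S1 = S2 := by
    have h2 := congrArg Polynomial.roots h1
    rwa [Polynomial.roots_multiset_prod_X_sub_C, Polynomial.roots_multiset_prod_X_sub_C] at h2
  have h3 := congrArg (fun s : Multiset ℂ => (s.map fun z => Real.negMulLog z.re).sum) hS
  simp only [hS1, hS2, Multiset.map_add, Multiset.sum_add, Multiset.map_map,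
    Multiset.map_replicate, Multiset.sum_replicate, Function.comp_def, Complex.ofReal_re,
    Complex.zero_re, Real.negMulLog_zero, smul_zero, add_zero] at h3
  rw [vnEntropy, dif_pos hH]
  rw [← Finset.sum_eq_multiset_sum, ← Finset.sum_eq_multiset_sum] at h3
  exact h3

lemma myCT {ι κ : Type*} (X : Matrix ι κ ℂ) : (Xᵀ)ᴴ = (Xᴴ)ᵀ := by
  ext i j; simp

lemma myTransferEq {ι κ : Type*} [Fintype ι] [DecidableEq ι] [Fintype κ] [DecidableEq κ]
    (M : Matrix ι κ ℂ) :
    vnEntropy ((Mᴴ * M)ᵀ) = vnEntropy (M * Mᴴ) := by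
  have hA : (M * Mᴴ).IsHermitian := isHermitian_mul_conjTranspose_self M
  set U : Matrix ι ι ℂ := (hA.eigenvectorUnitary : Matrix ι ι ℂ) with hUdef
  have hUU : U * star U = 1 := Unitary.coe_mul_star_self _
  set W : Matrix κ ι ℂ := Mᵀ * (star U)ᵀ with hWdef
  have hW' : Wᴴ = Uᵀ * (Mᴴ)ᵀ := by
    rw [hWdef, conjTranspose_mul, Matrix.star_eq_conjTranspose, myCT, myCT,
      conjTranspose_conjTranspose]
  have h1 : W * Wᴴ = (Mᴴ * M)ᵀ := by
    rw [hWdef, hW', Matrix.star_eq_conjTranspose]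
    calc Mᵀ * (Uᴴ)ᵀ * (Uᵀ * (Mᴴ)ᵀ)
        = Mᵀ * (((Uᴴ)ᵀ * Uᵀ) * (Mᴴ)ᵀ) := by
          rw [Matrix.mul_assoc, Matrix.mul_assoc]
      _ = Mᵀ * ((U * Uᴴ)ᵀ * (Mᴴ)ᵀ) := by rw [← transpose_mul]
      _ = Mᵀ * (Mᴴ)ᵀ := by
          rw [← Matrix.star_eq_conjTranspose U, hUU, transpose_one, Matrix.one_mul]
      _ = (Mᴴ * M)ᵀ := by rw [← transpose_mul]
  have h2 : Wᴴ * W = diagonal (fun i => ((hA.eigenvalues i : ℝ) : ℂ)) := by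
    have hsp : Uᴴ * (M * Mᴴ) * U = diagonal (RCLike.ofReal ∘ hA.eigenvalues) := by
      rw [← Matrix.star_eq_conjTranspose U, hUdef]
      have := hA.conjStarAlgAut_star_eigenvectorUnitary
      rwa [Unitary.conjStarAlgAut_star_apply] at this
    rw [hWdef, hW', Matrix.star_eq_conjTranspose]
    calc Uᵀ * (Mᴴ)ᵀ * (Mᵀ * (Uᴴ)ᵀ)
        = Uᵀ * ((Mᴴ)ᵀ * Mᵀ) * (Uᴴ)ᵀ := by
          rw [Matrix.mul_assoc, Matrix.mul_assoc, Matrix.mul_assoc]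
      _ = Uᵀ * (M * Mᴴ)ᵀ * (Uᴴ)ᵀ := by rw [← transpose_mul]
      _ = (Uᴴ * (M * Mᴴ) * U)ᵀ := by simp only [transpose_mul, Matrix.mul_assoc]
      _ = (diagonal (RCLike.ofReal ∘ hA.eigenvalues))ᵀ := by rw [hsp]
      _ = diagonal (fun i => ((hA.eigenvalues i : ℝ) : ℂ)) := by
          rw [diagonal_transpose]; rfl
  rw [← h1, myEntropyGram W _ h2, vnEntropy, dif_pos hA]

lemma sandwich {m n : ℕ} (v : Fin m → ℂ) (ψ : Fin m × Fin n → ℂ) :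
    (proj v ⊗ₖ (1 : Matrix (Fin n) (Fin n) ℂ)) * proj ψ * (proj v ⊗ₖ 1) =
      proj (fun k => v k.1 * ∑ a, (starRingEnd ℂ) (v a) * ψ (a, k.2)) := by
  ext ⟨a, b⟩ ⟨a', b'⟩
  simp only [Matrix.mul_apply, kroneckerMap_apply, proj, vecMulVec_apply, Pi.star_apply,
    Matrix.one_apply, Fintype.sum_prod_type, RCLike.star_def, mul_ite, ite_mul, mul_zero,
    zero_mul, mul_one, Finset.sum_ite_eq, Finset.sum_ite_eq', Finset.mem_univ, if_true,
    map_sum, _root_.map_mul, Complex.conj_conj, Finset.mul_sum, Finset.sum_mul]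
  exact Finset.sum_congr rfl fun x _ => Finset.sum_congr rfl fun y _ => by ring

lemma sumProj {α N : Type*} [Fintype α] [Fintype N] (g : α → N → ℂ) :
    (∑ i, proj (g i)) = (Matrix.of fun k i => g i k) * (Matrix.of fun k i => g i k)ᴴ := by
  ext k k'
  simp [Matrix.sum_apply, proj, vecMulVec_apply, Matrix.mul_apply, conjTranspose_apply]

lemma gramDiag {α N : Type*} [Fintype α] [DecidableEq α] [Fintype N] (g : α → N → ℂ)
    (h : ∀ i j, i ≠ j → (∑ k, (starRingEnd ℂ) (g i k) * g j k) = 0) :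
    (Matrix.of fun k i => g i k)ᴴ * (Matrix.of fun k i => g i k) =
      diagonal (fun i => ((∑ k, Complex.normSq (g i k) : ℝ) : ℂ)) := by
  ext i j
  by_cases hij : i = j
  · subst hij
    simp only [Matrix.mul_apply, conjTranspose_apply, Matrix.of_apply, diagonal_apply_eq,
      RCLike.star_def]
    push_cast
    exact Finset.sum_congr rfl fun k _ => by rw [Complex.normSq_eq_conj_mul_self]
  · simp only [Matrix.mul_apply, conjTranspose_apply, Matrix.of_apply,
      diagonal_apply_ne _ hij, RCLike.star_def]
    exact h i j hij

lemma entropyOrtho {α N : Type*} [Fintype α] [DecidableEq α] [Fintype N] [DecidableEq N]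
    (g : α → N → ℂ)
    (h : ∀ i j, i ≠ j → (∑ k, (starRingEnd ℂ) (g i k) * g j k) = 0) :
    vnEntropy (∑ i, proj (g i)) = ∑ i, Real.negMulLog (∑ k, Complex.normSq (g i k)) := by
  rw [sumProj, myEntropyGram _ _ (gramDiag g h)]

section Pieces
variable {m n : ℕ}

-- completeness of an Onb
lemma onbComplete {N : Type*} [Fintype N] [DecidableEq N] {e : N → N → ℂ} (he : Onb e)
    (a a' : N) : (∑ i, (starRingEnd ℂ) (e i a) * e i a') = if a = a' then 1 else 0 := by
  classical
  set E : Matrix N N ℂ := Matrix.of fun i k => e i k with hE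
  have h1 : E * Eᴴ = 1 := by
    ext i j
    have := congrArg (starRingEnd ℂ) (he i j)
    simp only [map_sum, _root_.map_mul, Complex.conj_conj, RCLike.star_def] at this
    simp only [Matrix.mul_apply, conjTranspose_apply, hE, Matrix.of_apply, RCLike.star_def,
      Matrix.one_apply]
    rw [this]
    split <;> simp
  have h2 : Eᴴ * E = 1 := mul_eq_one_comm.mp h1
  have := congrFun (congrFun h2 a) a'
  simpa [Matrix.mul_apply, conjTranspose_apply, hE, Matrix.one_apply] using this

-- sum of squared norms of an Onb row is 1
lemma onbNorm {N : Type*} [Fintype N] [DecidableEq N] {e : N → N → ℂ} (he : Onb e) (i : N) :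
    (∑ k, Complex.normSq (e i k)) = 1 := by
  have := he i i
  simp only [if_pos rfl] at this
  have h2 : ((∑ k, Complex.normSq (e i k) : ℝ) : ℂ) = 1 := by
    push_cast
    rw [Finset.sum_congr rfl fun k _ => (Complex.normSq_eq_conj_mul_self (z := e i k))]
    simpa using this
  exact_mod_cast h2


lemma entropyPure (ψ : Fin m × Fin n → ℂ) (hψ : (∑ k, star (ψ k) * ψ k) = 1) :
    vnEntropy (proj ψ) = 0 := by
  have h0 : proj ψ = ∑ _i : Fin 1, proj ψ := by simp
  rw [h0, entropyOrtho (fun _ : Fin 1 => ψ) (fun i j hij => absurd (Subsingleton.elim i j) hij)]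
  have h2 : ((∑ k, Complex.normSq (ψ k) : ℝ) : ℂ) = 1 := by
    push_cast
    rw [Finset.sum_congr rfl fun k _ => (Complex.normSq_eq_conj_mul_self (z := ψ k))]
    simpa [RCLike.star_def] using hψ
  have h3 : (∑ k, Complex.normSq (ψ k)) = 1 := by exact_mod_cast h2
  simp [h3]

lemma ptrace2Pure (ψ : Fin m × Fin n → ℂ) :
    ptrace2 (proj ψ) = (Matrix.of fun a b => ψ (a, b)) * (Matrix.of fun a b => ψ (a, b))ᴴ := by
  ext a a'
  simp [ptrace2, proj, vecMulVec_apply, Matrix.mul_apply, conjTranspose_apply, RCLike.star_def]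

lemma ptrace1Pure (ψ : Fin m × Fin n → ℂ) :
    ptrace1 (proj ψ) =
      ((Matrix.of fun a b => ψ (a, b))ᴴ * (Matrix.of fun a b => ψ (a, b)))ᵀ := by
  ext b b'
  simp only [ptrace1, proj, vecMulVec_apply, Matrix.of_apply, Pi.star_apply,
    Matrix.transpose_apply, Matrix.mul_apply, conjTranspose_apply, RCLike.star_def]
  exact Finset.sum_congr rfl fun a _ => by ring

lemma marginalEq (ψ : Fin m × Fin n → ℂ) :
    vnEntropy (ptrace1 (proj ψ)) = vnEntropy (ptrace2 (proj ψ)) := by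
  rw [ptrace1Pure, ptrace2Pure, myTransferEq]


variable (e : Fin m → Fin m → ℂ) (ψ : Fin m × Fin n → ℂ)

noncomputable def cvec (i : Fin m) (b : Fin n) : ℂ := ∑ a, (starRingEnd ℂ) (e i a) * ψ (a, b)

noncomputable def gvec (i : Fin m) (k : Fin m × Fin n) : ℂ := e i k.1 * cvec e ψ i k.2

noncomputable def qval (i : Fin m) : ℝ := ∑ b, Complex.normSq (cvec e ψ i b)

lemma postMeasEq : postMeas e (proj ψ) = ∑ i, proj (gvec e ψ i) := by
  unfold postMeas
  exact Finset.sum_congr rfl fun i _ => sandwich (e i) ψ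

lemma gOrtho (he : Onb e) (i j : Fin m) (hij : i ≠ j) :
    (∑ k, (starRingEnd ℂ) (gvec e ψ i k) * gvec e ψ j k) = 0 := by
  have hsplit : (∑ k, (starRingEnd ℂ) (gvec e ψ i k) * gvec e ψ j k) =
      (∑ a, (starRingEnd ℂ) (e i a) * e j a) *
        (∑ b, (starRingEnd ℂ) (cvec e ψ i b) * cvec e ψ j b) := by
    rw [Finset.sum_mul_sum, Fintype.sum_prod_type]
    exact Finset.sum_congr rfl fun a _ => Finset.sum_congr rfl fun b _ => by
      simp only [gvec, _root_.map_mul]; ring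
  have he' := he i j
  simp only [RCLike.star_def] at he'
  rw [hsplit, he', if_neg hij, zero_mul]

lemma gNorm (he : Onb e) (i : Fin m) :
    (∑ k, Complex.normSq (gvec e ψ i k)) = qval e ψ i := by
  have hsplit : (∑ k, Complex.normSq (gvec e ψ i k)) =
      (∑ a, Complex.normSq (e i a)) * (∑ b, Complex.normSq (cvec e ψ i b)) := by
    rw [Finset.sum_mul_sum, Fintype.sum_prod_type]
    exact Finset.sum_congr rfl fun a _ => Finset.sum_congr rfl fun b _ => by
      simp only [gvec, Complex.normSq_mul]
  rw [hsplit, onbNorm he, one_mul, qval]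

lemma ptrace2Post (he : Onb e) :
    ptrace2 (∑ i, proj (gvec e ψ i)) =
      ∑ i, proj (fun a => ((Real.sqrt (qval e ψ i) : ℝ) : ℂ) * e i a) := by
  have hq : ∀ i, 0 ≤ qval e ψ i :=
    fun i => Finset.sum_nonneg fun b _ => Complex.normSq_nonneg _
  ext a a'
  simp only [ptrace2, Matrix.of_apply, Matrix.sum_apply, proj, vecMulVec_apply, Pi.star_apply,
    RCLike.star_def, _root_.map_mul, Complex.conj_ofReal]
  rw [Finset.sum_comm]
  refine Finset.sum_congr rfl fun i _ => ?_
  have : ∀ b, gvec e ψ i (a, b) * (starRingEnd ℂ) (gvec e ψ i (a', b)) =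
      (e i a * (starRingEnd ℂ) (e i a')) * ((cvec e ψ i b) * (starRingEnd ℂ) (cvec e ψ i b)) := by
    intro b; simp only [gvec, _root_.map_mul]; ring
  rw [Finset.sum_congr rfl fun b _ => this b, ← Finset.mul_sum]
  have hsum : (∑ b, (cvec e ψ i b) * (starRingEnd ℂ) (cvec e ψ i b)) =
      ((qval e ψ i : ℝ) : ℂ) := by
    rw [qval]; push_cast
    exact Finset.sum_congr rfl fun b _ => by simp [Complex.mul_conj]
  rw [hsum]
  have : ((Real.sqrt (qval e ψ i) : ℝ) : ℂ) * e i a *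
      ((Real.sqrt (qval e ψ i) : ℝ) * (starRingEnd ℂ) (e i a')) =
      (((Real.sqrt (qval e ψ i) * Real.sqrt (qval e ψ i) : ℝ)) : ℂ) *
        (e i a * (starRingEnd ℂ) (e i a')) := by push_cast; ring
  rw [this, Real.mul_self_sqrt (hq i)]
  ring

lemma ptrace1Post (he : Onb e) :
    ptrace1 (∑ i, proj (gvec e ψ i)) = ptrace1 (proj ψ) := by
  ext b b'
  simp only [ptrace1, Matrix.of_apply, Matrix.sum_apply, proj, vecMulVec_apply, Pi.star_apply,
    RCLike.star_def, _root_.map_mul]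
  rw [Finset.sum_comm]
  have step1 : ∀ i, (∑ a, gvec e ψ i (a, b) * (starRingEnd ℂ) (gvec e ψ i (a, b'))) =
      cvec e ψ i b * (starRingEnd ℂ) (cvec e ψ i b') := by
    intro i
    have : ∀ a, gvec e ψ i (a, b) * (starRingEnd ℂ) (gvec e ψ i (a, b')) =
        (e i a * (starRingEnd ℂ) (e i a)) * (cvec e ψ i b * (starRingEnd ℂ) (cvec e ψ i b')) := by
      intro a; simp only [gvec, _root_.map_mul]; ring
    rw [Finset.sum_congr rfl fun a _ => this a, ← Finset.sum_mul]
    have h1 : (∑ a, e i a * (starRingEnd ℂ) (e i a)) = ((1 : ℝ) : ℂ) := by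
      have := onbNorm he i
      rw [← this]; push_cast
      exact Finset.sum_congr rfl fun a _ => by simp [Complex.mul_conj]
    rw [h1]; push_cast; ring
  rw [Finset.sum_congr rfl fun i _ => step1 i]
  have step2 : (∑ i, cvec e ψ i b * (starRingEnd ℂ) (cvec e ψ i b')) =
      ∑ a, ψ (a, b) * (starRingEnd ℂ) (ψ (a, b')) := by
    have expand : ∀ i, cvec e ψ i b * (starRingEnd ℂ) (cvec e ψ i b') =
        ∑ a, ∑ a', ((starRingEnd ℂ) (e i a) * e i a') *
          (ψ (a, b) * (starRingEnd ℂ) (ψ (a', b'))) := by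
      intro i
      rw [cvec, cvec, map_sum, Finset.sum_mul_sum]
      exact Finset.sum_congr rfl fun a _ => Finset.sum_congr rfl fun a' _ => by
        simp only [_root_.map_mul, Complex.conj_conj]; ring
    rw [Finset.sum_congr rfl fun i _ => expand i, Finset.sum_comm]
    refine Finset.sum_congr rfl fun a _ => ?_
    rw [Finset.sum_comm]
    have : ∀ a', (∑ i, ((starRingEnd ℂ) (e i a) * e i a') *
        (ψ (a, b) * (starRingEnd ℂ) (ψ (a', b')))) =
        (if a = a' then 1 else 0) * (ψ (a, b) * (starRingEnd ℂ) (ψ (a', b'))) := by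
      intro a'
      rw [← Finset.sum_mul, onbComplete he]
    rw [Finset.sum_congr rfl fun a' _ => this a']
    simp
  rw [step2]


lemma entropyPost (he : Onb e) :
    vnEntropy (postMeas e (proj ψ)) = ∑ i, Real.negMulLog (qval e ψ i) := by
  rw [postMeasEq, entropyOrtho (gvec e ψ) (gOrtho e ψ he)]
  exact Finset.sum_congr rfl fun i _ => by rw [gNorm e ψ he]

lemma entropyPtrace2Post (he : Onb e) :
    vnEntropy (ptrace2 (postMeas e (proj ψ))) = ∑ i, Real.negMulLog (qval e ψ i) := by
  have hq : ∀ i, 0 ≤ qval e ψ i :=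
    fun i => Finset.sum_nonneg fun b _ => Complex.normSq_nonneg _
  rw [postMeasEq, ptrace2Post e ψ he]
  rw [entropyOrtho (fun i a => ((Real.sqrt (qval e ψ i) : ℝ) : ℂ) * e i a) ?_]
  · refine Finset.sum_congr rfl fun i _ => ?_
    congr 1
    have : ∀ a, Complex.normSq (((Real.sqrt (qval e ψ i) : ℝ) : ℂ) * e i a) =
        qval e ψ i * Complex.normSq (e i a) := by
      intro a
      rw [Complex.normSq_mul, Complex.normSq_ofReal, Real.mul_self_sqrt (hq i)]
    rw [Finset.sum_congr rfl fun a _ => this a, ← Finset.mul_sum, onbNorm he, mul_one]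
  · intro i j hij
    have he' := he i j
    simp only [RCLike.star_def] at he'
    have : ∀ a, (starRingEnd ℂ) (((Real.sqrt (qval e ψ i) : ℝ) : ℂ) * e i a) *
        ((((Real.sqrt (qval e ψ j) : ℝ)) : ℂ) * e j a) =
        (((Real.sqrt (qval e ψ i) : ℝ) : ℂ) * ((Real.sqrt (qval e ψ j) : ℝ) : ℂ)) *
          ((starRingEnd ℂ) (e i a) * e j a) := by
      intro a; simp only [_root_.map_mul, Complex.conj_ofReal]; ring
    rw [Finset.sum_congr rfl fun a _ => this a, ← Finset.mul_sum, he', if_neg hij, mul_zero]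

lemma mutualInfoPost (he : Onb e) :
    mutualInfo (postMeas e (proj ψ)) = vnEntropy (ptrace2 (proj ψ)) := by
  rw [mutualInfo, entropyPost e ψ he, entropyPtrace2Post e ψ he]
  have h1 : ptrace1 (postMeas e (proj ψ)) = ptrace1 (proj ψ) := by
    rw [postMeasEq]; exact ptrace1Post e ψ he
  rw [h1, marginalEq]
  ring

lemma stdOnb : Onb (fun i k : Fin m => if i = k then (1 : ℂ) else 0) := by
  intro i j
  simp only [apply_ite (star : ℂ → ℂ), star_one, star_zero, ite_mul, one_mul, zero_mul, mul_ite, mul_one,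
    mul_zero]
  rw [Finset.sum_congr rfl (fun k _ => by split_ifs with h1 h2 <;> simp_all)
    (g := fun k => if i = k ∧ j = k then (1:ℂ) else 0)]
  by_cases hij : i = j
  · subst hij; simp
  · rw [if_neg hij, Finset.sum_eq_zero]
    intro k _
    rw [if_neg]
    rintro ⟨rfl, rfl⟩; exact hij rfl

lemma setSingleton (hψ : (∑ k, star (ψ k) * ψ k) = 1) :
    {x : ℝ | ∃ e, Onb e ∧ x = mutualInfo (postMeas e (proj ψ))} =
      {vnEntropy (ptrace2 (proj ψ))} := by
  ext x
  constructor
  · rintro ⟨e, he, rfl⟩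
    exact mutualInfoPost e ψ he
  · rintro rfl
    exact ⟨_, stdOnb, (mutualInfoPost _ ψ stdOnb).symm⟩

end Pieces
end ProofHelpers

/-- For every pure density matrix `ρ = |ψ⟩⟨ψ|` on `ℂ^m ⊗ ℂ^n`, the
quantum discord equals the entropy of entanglement `S(Tr_2 ρ)`; the optimal measurement
achieves `sup_Π I(Π[ρ]) = S(Tr_2 ρ)`, while `I(ρ) = 2 S(Tr_2 ρ)`. -/
theorem statement18 {m n : ℕ} (ψ : Fin m × Fin n → ℂ)
    (hψ : (∑ k, star (ψ k) * ψ k) = 1) :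
    discord (proj ψ) = vnEntropy (ptrace2 (proj ψ)) ∧
      sSup {x : ℝ | ∃ e, Onb e ∧ x = mutualInfo (postMeas e (proj ψ))} =
        vnEntropy (ptrace2 (proj ψ)) ∧
      mutualInfo (proj ψ) = 2 * vnEntropy (ptrace2 (proj ψ)) := by
  have hsup : sSup {x : ℝ | ∃ e, Onb e ∧ x = mutualInfo (postMeas e (proj ψ))} =
      vnEntropy (ptrace2 (proj ψ)) := by
    rw [setSingleton ψ hψ, csSup_singleton]
  have hmi : mutualInfo (proj ψ) = 2 * vnEntropy (ptrace2 (proj ψ)) := by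
    rw [mutualInfo, marginalEq, entropyPure ψ hψ]; ring
  refine ⟨?_, hsup, hmi⟩
  rw [discord, hsup, hmi]; ring
end
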